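/- arXiv:1507.07460 — 2 statements merged into one kernel-verified Lean document; each statement's English description precedes it below -/
import Mathlib

section
/- Let A be a nonnegative weakly irreducible tensor of order m and dimension n with slice sums K_i = sum over all indices i_2,...,i_m of a_{i i_2 ... i_m}. Then the spectral radius rho(A) satisfies min over circuits gamma in the digraph G_A of (prod_{i in gamma} K_i)^{1/|gamma|} <= rho(A) <= max over circuits gamma of (prod_{i in gamma} K_i)^{1/|gamma|}. -/
open scoped BigOperators
open Finset Filter
open scoped Topology

/-- The arc relation of the digraph `G_A` of an order-`m` dimension-`n` tensor `A`,
    whose entries are indexed by a head index and a tail of `m - 1` indices: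
    `(i, j)` is an arc when some entry `a_{i i_2 ... i_m} ≠ 0` has `j` among `i_2, ..., i_m`. -/
def tArc (m n : ℕ) (A : Fin n → (Fin (m - 1) → Fin n) → ℝ) (i j : Fin n) : Prop :=
  ∃ t : Fin (m - 1) → Fin n, A i t ≠ 0 ∧ j ∈ Set.range t

/-- A digraph (given by its arc relation) is strongly connected. -/
def StronglyConnected {n : ℕ} (arc : Fin n → Fin n → Prop) : Prop :=
  ∀ i j : Fin n, Relation.ReflTransGen arc i j

/-- `γ 0, γ 1, ..., γ p = γ 0` is a circuit (closed directed walk, loops allowed)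
    of length `p` in the digraph with arc relation `arc`. -/
def IsCircuit {n : ℕ} (arc : Fin n → Fin n → Prop) (p : ℕ) (γ : ℕ → Fin n) : Prop :=
  0 < p ∧ γ p = γ 0 ∧ ∀ j < p, arc (γ j) (γ (j + 1))

/-- `lam` is an eigenvalue of the order-`m` dimension-`n` real tensor `A`:
    there is a nonzero complex vector `x` with `A x^{m-1} = lam x^{[m-1]}`. -/
def IsEig (m n : ℕ) (A : Fin n → (Fin (m - 1) → Fin n) → ℝ) (lam : ℂ) : Prop :=
  ∃ x : Fin n → ℂ, x ≠ 0 ∧ ∀ i : Fin n,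
    ∑ t : Fin (m - 1) → Fin n, (A i t : ℂ) * ∏ j, x (t j) = lam * x i ^ (m - 1)

/-- The spectral radius of a tensor: the supremum of moduli of its eigenvalues. -/
noncomputable def specRad (m n : ℕ) (A : Fin n → (Fin (m - 1) → Fin n) → ℝ) : ℝ :=
  sSup {r : ℝ | ∃ lam : ℂ, IsEig m n A lam ∧ ‖lam‖ = r}

/-- The `i`-th slice sum `K_i = ∑_{i_2,...,i_m} a_{i i_2 ... i_m}`. -/
def sliceSum (m n : ℕ) (A : Fin n → (Fin (m - 1) → Fin n) → ℝ) (i : Fin n) : ℝ :=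
  ∑ t : Fin (m - 1) → Fin n, A i t

/-- `(A x^{m-1})_i = ∑_{i_2,...,i_m} a_{i i_2 ... i_m} x_{i_2} ⋯ x_{i_m}`. -/
def Ax (m n : ℕ) (A : Fin n → (Fin (m - 1) → Fin n) → ℝ) (x : Fin n → ℝ) (i : Fin n) : ℝ :=
  ∑ t : Fin (m - 1) → Fin n, A i t * ∏ j, x (t j)






section chains
variable {n : ℕ}

lemma pow_le_imp_le_rpow {c B : ℝ} (hc : 0 ≤ c) {p : ℕ} (hp : 0 < p) (h : c ^ p ≤ B) :
    c ≤ B ^ ((p : ℝ)⁻¹) := by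
  have hp' : (p : ℝ) ≠ 0 := Nat.cast_ne_zero.mpr hp.ne'
  have h1 : c = (c ^ p : ℝ) ^ ((p : ℝ)⁻¹) := by
    rw [← Real.rpow_natCast c p, ← Real.rpow_mul hc, mul_inv_cancel₀ hp', Real.rpow_one]
  rw [h1]
  exact Real.rpow_le_rpow (pow_nonneg hc p) h (by positivity)

lemma rpow_le_imp_of_pow_le {c B : ℝ} (hB : 0 ≤ B) (hc : 0 ≤ c) {p : ℕ} (hp : 0 < p)
    (h : B ≤ c ^ p) : B ^ ((p : ℝ)⁻¹) ≤ c := by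
  have hp' : (p : ℝ) ≠ 0 := Nat.cast_ne_zero.mpr hp.ne'
  have h1 : c = (c ^ p : ℝ) ^ ((p : ℝ)⁻¹) := by
    rw [← Real.rpow_natCast c p, ← Real.rpow_mul hc, mul_inv_cancel₀ hp', Real.rpow_one]
  rw [h1]
  exact Real.rpow_le_rpow hB h (by positivity)

lemma chain_pow_le (γ : ℕ → Fin n) (p : ℕ) (hγ : γ p = γ 0)
    (K y : Fin n → ℝ) (c : ℝ) (hc : 0 ≤ c) (hK : ∀ i, 0 ≤ K i)
    (hy : ∀ j, 0 < y (γ j))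
    (hstep : ∀ j < p, c * y (γ j) ≤ K (γ j) * y (γ (j + 1))) :
    c ^ p ≤ ∏ j ∈ range p, K (γ j) := by
  have main : ∀ j, j ≤ p → c ^ j * y (γ 0) ≤ (∏ i ∈ range j, K (γ i)) * y (γ j) := by
    intro j
    induction j with
    | zero => intro _; simp
    | succ j ih =>
      intro hj
      have hj' : j < p := Nat.lt_of_succ_le hj
      have h1 := ih hj'.le
      calc c ^ (j + 1) * y (γ 0) = c * (c ^ j * y (γ 0)) := by ring
        _ ≤ c * ((∏ i ∈ range j, K (γ i)) * y (γ j)) := mul_le_mul_of_nonneg_left h1 hc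
        _ = (∏ i ∈ range j, K (γ i)) * (c * y (γ j)) := by ring
        _ ≤ (∏ i ∈ range j, K (γ i)) * (K (γ j) * y (γ (j + 1))) :=
            mul_le_mul_of_nonneg_left (hstep j hj') (Finset.prod_nonneg fun i _ => hK _)
        _ = (∏ i ∈ range (j + 1), K (γ i)) * y (γ (j + 1)) := by rw [prod_range_succ]; ring
  have h2 := main p le_rfl
  rw [hγ] at h2
  exact le_of_mul_le_mul_right h2 (hy 0)

lemma chain_le_pow (γ : ℕ → Fin n) (p : ℕ) (hγ : γ p = γ 0)
    (K y : Fin n → ℝ) (c : ℝ) (hc : 0 ≤ c) (hK : ∀ i, 0 ≤ K i)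
    (hy : ∀ j, 0 < y (γ j))
    (hstep : ∀ j < p, K (γ j) * y (γ (j + 1)) ≤ c * y (γ j)) :
    (∏ j ∈ range p, K (γ j)) ≤ c ^ p := by
  have main : ∀ j, j ≤ p → (∏ i ∈ range j, K (γ i)) * y (γ j) ≤ c ^ j * y (γ 0) := by
    intro j
    induction j with
    | zero => intro _; simp
    | succ j ih =>
      intro hj
      have hj' : j < p := Nat.lt_of_succ_le hj
      have h1 := ih hj'.le
      calc (∏ i ∈ range (j + 1), K (γ i)) * y (γ (j + 1))
          = (∏ i ∈ range j, K (γ i)) * (K (γ j) * y (γ (j + 1))) := by rw [prod_range_succ]; ring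
        _ ≤ (∏ i ∈ range j, K (γ i)) * (c * y (γ j)) :=
            mul_le_mul_of_nonneg_left (hstep j hj') (Finset.prod_nonneg fun i _ => hK _)
        _ = c * ((∏ i ∈ range j, K (γ i)) * y (γ j)) := by ring
        _ ≤ c * (c ^ j * y (γ 0)) := mul_le_mul_of_nonneg_left h1 hc
        _ = c ^ (j + 1) * y (γ 0) := by ring
  have h2 := main p le_rfl
  rw [hγ] at h2
  exact le_of_mul_le_mul_right h2 (hy 0)

lemma exists_circuit_iter (arc : Fin n → Fin n → Prop) (s : Fin n → Fin n)
    (P : Fin n → Prop) (hP : ∀ i, P i → P (s i)) (harc : ∀ i, P i → arc i (s i))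
    (i0 : Fin n) (h0 : P i0) :
    ∃ (p : ℕ) (γ : ℕ → Fin n), IsCircuit arc p γ ∧ (∀ j, γ (j + 1) = s (γ j)) ∧
      (∀ j, P (γ j)) := by
  classical
  set g : ℕ → Fin n := fun k => s^[k] i0 with hg
  have hPg : ∀ k, P (g k) := by
    intro k
    induction k with
    | zero => exact h0
    | succ k ih =>
      have : g (k + 1) = s (g k) := Function.iterate_succ_apply' s k i0
      rw [this]; exact hP _ ih
  have hcard : (univ : Finset (Fin n)).card < (range (n + 1)).card := by simp
  obtain ⟨a, _, b, _, hab, heq⟩ :=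
    Finset.exists_ne_map_eq_of_card_lt_of_maps_to hcard (fun k _ => mem_univ (g k))
  obtain ⟨k, l, hkl, hgeq⟩ : ∃ k l, k < l ∧ g k = g l := by
    rcases lt_or_gt_of_ne hab with h | h
    · exact ⟨a, b, h, heq⟩
    · exact ⟨b, a, h, heq.symm⟩
  have hiter : ∀ j, g (k + (j + 1)) = s (g (k + j)) := by
    intro j
    have : k + (j + 1) = (k + j) + 1 := by ring
    rw [this, hg]
    exact Function.iterate_succ_apply' s (k + j) i0
  refine ⟨l - k, fun j => g (k + j), ⟨Nat.sub_pos_of_lt hkl, ?_, ?_⟩, hiter, fun j => hPg _⟩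
  · show g (k + (l - k)) = g (k + 0)
    have : k + (l - k) = l := Nat.add_sub_cancel' hkl.le
    rw [this]
    simpa using hgeq.symm
  · intro j _
    show arc (g (k + j)) (g (k + (j + 1)))
    rw [hiter j]
    exact harc _ (hPg _)

end chains



def circSet (m n : ℕ) (A : Fin n → (Fin (m - 1) → Fin n) → ℝ) : Set ℝ :=
  {r : ℝ | ∃ (p : ℕ) (γ : ℕ → Fin n), IsCircuit (tArc m n A) p γ ∧
    r = (∏ j ∈ Finset.range p, sliceSum m n A (γ j)) ^ ((p : ℝ)⁻¹)}

lemma sliceSum_nonneg (m n : ℕ) (A : Fin n → (Fin (m - 1) → Fin n) → ℝ)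
    (hA : ∀ i t, 0 ≤ A i t) (i : Fin n) : 0 ≤ sliceSum m n A i :=
  Finset.sum_nonneg fun t _ => hA i t

lemma circSet_nonneg (m n : ℕ) (A : Fin n → (Fin (m - 1) → Fin n) → ℝ)
    (hA : ∀ i t, 0 ≤ A i t) : ∀ r ∈ circSet m n A, 0 ≤ r := by
  rintro r ⟨p, γ, _, rfl⟩
  exact Real.rpow_nonneg (Finset.prod_nonneg fun j _ => sliceSum_nonneg m n A hA _) _

lemma circSet_bddAbove (m n : ℕ) (hn : 0 < n) (A : Fin n → (Fin (m - 1) → Fin n) → ℝ)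
    (hA : ∀ i t, 0 ≤ A i t) : BddAbove (circSet m n A) := by
  have hne : (univ : Finset (Fin n)).Nonempty := ⟨⟨0, hn⟩, mem_univ _⟩
  set KM : ℝ := univ.sup' hne (sliceSum m n A) with hKM
  have hKM0 : 0 ≤ KM := le_trans (sliceSum_nonneg m n A hA ⟨0, hn⟩)
    (Finset.le_sup' _ (mem_univ _))
  refine ⟨KM, ?_⟩
  rintro r ⟨p, γ, hcir, rfl⟩
  have h1 : (∏ j ∈ range p, sliceSum m n A (γ j)) ≤ KM ^ p := by
    calc (∏ j ∈ range p, sliceSum m n A (γ j)) ≤ ∏ _j ∈ range p, KM :=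
        Finset.prod_le_prod (fun j _ => sliceSum_nonneg m n A hA _)
          (fun j _ => Finset.le_sup' _ (mem_univ _))
      _ = KM ^ p := by simp
  have h2 : (∏ j ∈ range p, sliceSum m n A (γ j)) ^ ((p:ℝ)⁻¹) ≤ (KM ^ p) ^ ((p:ℝ)⁻¹) :=
    Real.rpow_le_rpow (Finset.prod_nonneg fun j _ => sliceSum_nonneg m n A hA _) h1
      (by positivity)
  refine h2.trans ?_
  have hp' : (p : ℝ) ≠ 0 := Nat.cast_ne_zero.mpr hcir.1.ne'
  rw [← Real.rpow_natCast KM p, ← Real.rpow_mul hKM0, mul_inv_cancel₀ hp', Real.rpow_one]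

lemma abs_eig_le (m n : ℕ) (hm : 2 ≤ m) (hn : 0 < n)
    (A : Fin n → (Fin (m - 1) → Fin n) → ℝ) (hA : ∀ i t, 0 ≤ A i t) {lam : ℂ}
    (h : IsEig m n A lam) : ‖lam‖ ≤ sSup (circSet m n A) := by
  classical
  obtain ⟨x, hx0, heq⟩ := h
  set z : Fin n → ℝ := fun i => ‖x i‖ with hz
  have hzn : ∀ i, 0 ≤ z i := fun i => norm_nonneg _
  have hq : m - 1 ≠ 0 := by omega
  have hSnn : 0 ≤ sSup (circSet m n A) := Real.sSup_nonneg (circSet_nonneg m n A hA)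
  rcases eq_or_lt_of_le (norm_nonneg lam) with h0 | hcpos
  · rw [← h0]; exact hSnn
  have key : ∀ i, ‖lam‖ * z i ^ (m-1) ≤
      ∑ t : Fin (m-1) → Fin n, A i t * ∏ j, z (t j) := by
    intro i
    have h1 : ‖lam‖ * z i ^ (m - 1) = ‖lam * x i ^ (m - 1)‖ := by
      rw [norm_mul, norm_pow]
    rw [h1, ← heq i]
    refine (norm_sum_le _ _).trans ?_
    apply Finset.sum_le_sum
    intro t _
    rw [norm_mul, norm_prod, Complex.norm_real, Real.norm_of_nonneg (hA i t)]
  have hmax : ∀ i, (∃ j, tArc m n A i j) →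
      ∃ j, tArc m n A i j ∧ ∀ j', tArc m n A i j' → z j' ≤ z j := by
    intro i hi
    obtain ⟨j0, hj0⟩ := hi
    obtain ⟨j, hjmem, hjmax⟩ := Finset.exists_max_image
      (univ.filter fun j => tArc m n A i j) z ⟨j0, by simp [hj0]⟩
    exact ⟨j, (mem_filter.mp hjmem).2, fun j' hj' => hjmax j' (by simp [hj'])⟩
  set s : Fin n → Fin n := fun i => if h : ∃ j, tArc m n A i j then (hmax i h).choose else i
    with hs
  have harcne : ∀ i, 0 < z i → ∃ j, tArc m n A i j := by
    intro i hzi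
    by_contra hno
    push_neg at hno
    have hA0 : ∀ t : Fin (m-1) → Fin n, A i t = 0 := by
      intro t
      by_contra hAt
      exact hno (t ⟨0, by omega⟩) ⟨t, hAt, ⟨_, rfl⟩⟩
    have hk := key i
    rw [Finset.sum_eq_zero (fun t _ => by rw [hA0 t, zero_mul])] at hk
    nlinarith [pow_pos hzi (m-1)]
  have hstep : ∀ i, 0 < z i → tArc m n A i (s i) ∧
      ‖lam‖ * z i ^ (m-1) ≤ sliceSum m n A i * z (s i) ^ (m-1) ∧ 0 < z (s i) := by
    intro i hzi
    have hne := harcne i hzi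
    have hspec := (hmax i hne).choose_spec
    have hsi : s i = (hmax i hne).choose := by rw [hs]; exact dif_pos hne
    have harc : tArc m n A i (s i) := hsi ▸ hspec.1
    have hub : ∀ t, A i t ≠ 0 → ∀ j : Fin (m-1), z (t j) ≤ z (s i) := by
      intro t hAt j
      have harcj : tArc m n A i (t j) := ⟨t, hAt, ⟨j, rfl⟩⟩
      rw [hsi]; exact hspec.2 _ harcj
    have hbd : (∑ t : Fin (m-1) → Fin n, A i t * ∏ j, z (t j))
        ≤ sliceSum m n A i * z (s i) ^ (m-1) := by
      rw [sliceSum, Finset.sum_mul]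
      apply Finset.sum_le_sum
      intro t _
      rcases eq_or_ne (A i t) 0 with h | h
      · simp [h]
      · have hprod : (∏ j, z (t j)) ≤ z (s i) ^ (m - 1) := by
          calc (∏ j, z (t j)) ≤ ∏ _j : Fin (m-1), z (s i) :=
              Finset.prod_le_prod (fun j _ => hzn _) (fun j _ => hub t h j)
          _ = z (s i) ^ (m - 1) := by simp
        exact mul_le_mul_of_nonneg_left hprod (hA i t)
    have hmain := (key i).trans hbd
    refine ⟨harc, hmain, ?_⟩
    by_contra hzs
    push_neg at hzs
    have hz0 : z (s i) = 0 := le_antisymm hzs (hzn _)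
    rw [hz0, zero_pow hq, mul_zero] at hmain
    nlinarith [pow_pos hzi (m-1)]
  obtain ⟨i0, hxi0⟩ : ∃ i, x i ≠ 0 := by
    by_contra hno; push_neg at hno; exact hx0 (funext hno)
  have hzi0 : 0 < z i0 := norm_pos_iff.mpr hxi0
  obtain ⟨p, γ, hcir, hγs, hγP⟩ := exists_circuit_iter (tArc m n A) s (fun i => 0 < z i)
    (fun i hi => (hstep i hi).2.2) (fun i hi => (hstep i hi).1) i0 hzi0
  have hpow : ‖lam‖ ^ p ≤ ∏ j ∈ range p, sliceSum m n A (γ j) := by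
    apply chain_pow_le γ p hcir.2.1 _ (fun i => z i ^ (m-1)) _ (norm_nonneg lam)
      (fun i => sliceSum_nonneg m n A hA i) (fun j => pow_pos (hγP j) _)
    intro j hj
    rw [hγs j]
    exact (hstep (γ j) (hγP j)).2.1
  have hmem : (∏ j ∈ range p, sliceSum m n A (γ j)) ^ ((p:ℝ)⁻¹) ∈ circSet m n A :=
    ⟨p, γ, hcir, rfl⟩
  exact (pow_le_imp_le_rpow (norm_nonneg lam) hcir.1 hpow).trans
    (le_csSup (circSet_bddAbove m n hn A hA) hmem)

lemma specRad_le_sSup (m n : ℕ) (hm : 2 ≤ m) (hn : 0 < n)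
    (A : Fin n → (Fin (m - 1) → Fin n) → ℝ) (hA : ∀ i t, 0 ≤ A i t) :
    specRad m n A ≤ sSup (circSet m n A) := by
  apply Real.sSup_le
  · rintro r ⟨lam, hl, rfl⟩
    exact abs_eig_le m n hm hn A hA hl
  · exact Real.sSup_nonneg (circSet_nonneg m n A hA)



section osc
variable {n : ℕ} [NeZero n]

noncomputable def osc (u : Fin n → ℝ) : ℝ :=
  univ.sup' univ_nonempty u - univ.inf' univ_nonempty u

lemma le_osc (u : Fin n → ℝ) (i j : Fin n) : u i - u j ≤ osc u :=
  sub_le_sub (Finset.le_sup' u (mem_univ i)) (Finset.inf'_le u (mem_univ j))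

lemma osc_nonneg (u : Fin n → ℝ) : 0 ≤ osc u := by
  have := le_osc u ⟨0, Nat.pos_of_ne_zero (NeZero.ne n)⟩ ⟨0, Nat.pos_of_ne_zero (NeZero.ne n)⟩
  simpa using this

lemma osc_le {u : Fin n → ℝ} {r : ℝ} (h : ∀ i j, u i - u j ≤ r) : osc u ≤ r := by
  obtain ⟨i, _, hi⟩ := Finset.exists_mem_eq_sup' (univ_nonempty (α := Fin n)) u
  obtain ⟨j, _, hj⟩ := Finset.exists_mem_eq_inf' (univ_nonempty (α := Fin n)) u
  rw [osc, hi, hj]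
  exact h i j

lemma abs_sub_le_osc (u : Fin n → ℝ) (i j : Fin n) : |u i - u j| ≤ osc u := by
  rw [abs_sub_le_iff]
  exact ⟨le_osc u i j, le_osc u j i⟩

lemma osc_sub_le (u v : Fin n → ℝ) : osc (u - v) ≤ osc u + osc v := by
  apply osc_le
  intro i j
  have h1 := le_osc u i j
  have h2 := le_osc v j i
  simp only [Pi.sub_apply]
  linarith

lemma osc_shift (u : Fin n → ℝ) (c : ℝ) : osc (fun i => u i - c) = osc u := by
  apply le_antisymm
  · apply osc_le; intro i j; simpa using le_osc u i j
  · apply osc_le; intro i j; simpa using le_osc (fun i => u i - c) i j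

lemma osc_le_two_dist (u v : Fin n → ℝ) : osc (u - v) ≤ 2 * dist u v := by
  apply osc_le
  intro i j
  have h1 : dist (u i) (v i) ≤ dist u v := dist_le_pi_dist u v i
  have h2 : dist (u j) (v j) ≤ dist u v := dist_le_pi_dist u v j
  rw [Real.dist_eq] at h1 h2
  have := abs_le.mp h1
  have := abs_le.mp h2
  simp only [Pi.sub_apply]
  cases' abs_le.mp h1 with a b
  cases' abs_le.mp h2 with a2 b2
  linarith

lemma lipschitz_osc : LipschitzWith 2 (osc (n := n)) := by
  apply LipschitzWith.of_dist_le_mul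
  intro u v
  rw [Real.dist_eq, abs_le]
  have key : ∀ a b : Fin n → ℝ, osc a - osc b ≤ 2 * dist a b := by
    intro a b
    have h : osc a ≤ osc b + 2 * dist a b := by
      apply osc_le
      intro i j
      have h1 := le_osc b i j
      have h2 := le_osc (a - b) i j
      have h3 := osc_le_two_dist a b
      have : a i - a j = (b i - b j) + ((a - b) i - (a - b) j) := by
        simp only [Pi.sub_apply]; ring
      rw [this]
      have := (le_osc (a - b) i j).trans h3
      simp only [Pi.sub_apply] at this ⊢
      linarith
    linarith
  constructor
  · have := key v u
    rw [dist_comm] at this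
    push_cast
    linarith
  · have := key u v
    push_cast
    linarith

lemma isClosed_osc_le (R : ℝ) : IsClosed {u : Fin n → ℝ | osc u ≤ R} :=
  IsClosed.preimage lipschitz_osc.continuous isClosed_Iic

lemma sup'_le_osc_add_inf' (u : Fin n → ℝ) :
    univ.sup' univ_nonempty u = osc u + univ.inf' univ_nonempty u := by
  rw [osc]; ring

lemma le_sup'_univ (u : Fin n → ℝ) (i : Fin n) : u i ≤ univ.sup' univ_nonempty u :=
  Finset.le_sup' u (mem_univ i)

lemma inf'_le_univ (u : Fin n → ℝ) (i : Fin n) : univ.inf' univ_nonempty u ≤ u i :=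
  Finset.inf'_le u (mem_univ i)

lemma sup'_neg_eq (u : Fin n → ℝ) :
    univ.sup' univ_nonempty (fun i => -(u i)) = - univ.inf' univ_nonempty u := by
  apply le_antisymm
  · apply Finset.sup'_le
    intro i _
    simp [inf'_le_univ u i]
  · obtain ⟨j, _, hj⟩ := Finset.exists_mem_eq_inf' (univ_nonempty (α := Fin n)) u
    rw [hj]
    exact Finset.le_sup' (fun i => -(u i)) (mem_univ j)

lemma inf'_neg_eq (u : Fin n → ℝ) :
    univ.inf' univ_nonempty (fun i => -(u i)) = - univ.sup' univ_nonempty u := by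
  have := sup'_neg_eq (fun i => -(u i))
  simp only [neg_neg] at this
  have h2 : univ.sup' univ_nonempty (fun i => u i) = univ.sup' univ_nonempty u := rfl
  linarith [this]

end osc

section posTensor
variable {n q : ℕ} [NeZero n]

noncomputable def Gm (B : Fin n → (Fin q → Fin n) → ℝ) (u : Fin n → ℝ) (i : Fin n) : ℝ :=
  ∑ t : Fin q → Fin n, B i t * Real.exp (∑ k, u (t k))

noncomputable def Hm (B : Fin n → (Fin q → Fin n) → ℝ) (u : Fin n → ℝ) (i : Fin n) : ℝ :=
  Real.log (Gm B u i) / q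

noncomputable def Bmin (B : Fin n → (Fin q → Fin n) → ℝ) : ℝ :=
  univ.inf' univ_nonempty (fun p : Fin n × (Fin q → Fin n) => B p.1 p.2)

noncomputable def Bmax (B : Fin n → (Fin q → Fin n) → ℝ) : ℝ :=
  univ.sup' univ_nonempty (fun p : Fin n × (Fin q → Fin n) => B p.1 p.2)

noncomputable def Rc (B : Fin n → (Fin q → Fin n) → ℝ) : ℝ :=
  Real.log (Bmax B / Bmin B) / q + 1

noncomputable def δc (B : Fin n → (Fin q → Fin n) → ℝ) : ℝ :=
  (Bmin B / Bmax B) * ((n : ℝ) ^ q)⁻¹ * Real.exp (-(q * Rc B))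

noncomputable def A0c (B : Fin n → (Fin q → Fin n) → ℝ) : ℝ := 2 * q * Rc B

noncomputable def c0c (B : Fin n → (Fin q → Fin n) → ℝ) : ℝ :=
  δc B * (1 - Real.exp (-(A0c B))) / A0c B

noncomputable def κc (B : Fin n → (Fin q → Fin n) → ℝ) : ℝ := 1 - 2 * c0c B

variable {B : Fin n → (Fin q → Fin n) → ℝ}

lemma Bmin_pos (hB : ∀ i t, 0 < B i t) : 0 < Bmin B := by
  obtain ⟨p, _, hp⟩ := Finset.exists_mem_eq_inf'
    (univ_nonempty (α := Fin n × (Fin q → Fin n)))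
    (fun p : Fin n × (Fin q → Fin n) => B p.1 p.2)
  rw [Bmin, hp]; exact hB _ _

lemma Bmin_le (i : Fin n) (t : Fin q → Fin n) : Bmin B ≤ B i t :=
  Finset.inf'_le (fun p : Fin n × (Fin q → Fin n) => B p.1 p.2) (mem_univ (i, t))

lemma le_Bmax (i : Fin n) (t : Fin q → Fin n) : B i t ≤ Bmax B :=
  Finset.le_sup' (fun p : Fin n × (Fin q → Fin n) => B p.1 p.2) (mem_univ (i, t))

lemma Bmin_le_Bmax : Bmin B ≤ Bmax B :=
  le_trans (Bmin_le (⟨0, Nat.pos_of_ne_zero (NeZero.ne n)⟩)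
    (fun _ => ⟨0, Nat.pos_of_ne_zero (NeZero.ne n)⟩)) (le_Bmax _ _)

lemma Bmax_pos (hB : ∀ i t, 0 < B i t) : 0 < Bmax B := lt_of_lt_of_le (Bmin_pos hB) Bmin_le_Bmax

lemma Gm_pos (hB : ∀ i t, 0 < B i t) (u : Fin n → ℝ) (i : Fin n) : 0 < Gm B u i :=
  Finset.sum_pos (fun t _ => mul_pos (hB i t) (Real.exp_pos _)) univ_nonempty

lemma Rc_one_le (hB : ∀ i t, 0 < B i t) : 1 ≤ Rc B := by
  rw [Rc]
  have h1 : 0 ≤ Real.log (Bmax B / Bmin B) :=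
    Real.log_nonneg ((one_le_div (Bmin_pos hB)).mpr Bmin_le_Bmax)
  have h2 : 0 ≤ Real.log (Bmax B / Bmin B) / q := div_nonneg h1 (Nat.cast_nonneg q)
  linarith

lemma osc_Hm_le (hq : 0 < q) (hB : ∀ i t, 0 < B i t) (u : Fin n → ℝ) :
    osc (Hm B u) ≤ Rc B := by
  have hq' : (0:ℝ) < q := Nat.cast_pos.mpr hq
  apply osc_le
  intro i j
  have hratio : Gm B u i ≤ (Bmax B / Bmin B) * Gm B u j := by
    rw [Gm, Gm, Finset.mul_sum]
    apply Finset.sum_le_sum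
    intro t _
    have h1 : B i t ≤ (Bmax B / Bmin B) * B j t := by
      have h2 : B i t ≤ Bmax B := le_Bmax i t
      have h3 : Bmin B ≤ B j t := Bmin_le j t
      have h4 := Bmin_pos hB
      calc B i t ≤ Bmax B := h2
        _ = (Bmax B / Bmin B) * Bmin B := by field_simp
        _ ≤ (Bmax B / Bmin B) * B j t :=
            mul_le_mul_of_nonneg_left h3 (le_of_lt (div_pos (Bmax_pos hB) h4))
    calc B i t * Real.exp (∑ k, u (t k)) ≤ ((Bmax B / Bmin B) * B j t) * Real.exp (∑ k, u (t k)) :=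
          mul_le_mul_of_nonneg_right h1 (Real.exp_pos _).le
      _ = Bmax B / Bmin B * (B j t * Real.exp (∑ k, u (t k))) := by ring
  have hlog : Real.log (Gm B u i) - Real.log (Gm B u j) ≤ Real.log (Bmax B / Bmin B) := by
    have h5 : Real.log (Gm B u i) ≤ Real.log (Bmax B / Bmin B) + Real.log (Gm B u j) := by
      have hrpos : (0:ℝ) < Bmax B / Bmin B := div_pos (Bmax_pos hB) (Bmin_pos hB)
      have h6 : Real.log (Gm B u i) ≤ Real.log ((Bmax B / Bmin B) * Gm B u j) :=
        Real.log_le_log (Gm_pos hB u i) hratio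
      rwa [Real.log_mul hrpos.ne' (Gm_pos hB u j).ne'] at h6
    linarith
  have : Hm B u i - Hm B u j = (Real.log (Gm B u i) - Real.log (Gm B u j)) / q := by
    rw [Hm, Hm]; ring
  rw [this, Rc]
  have h7 : (Real.log (Gm B u i) - Real.log (Gm B u j)) / q ≤ Real.log (Bmax B / Bmin B) / q := by
    gcongr
  linarith

lemma A0c_pos (hq : 0 < q) (hB : ∀ i t, 0 < B i t) : 0 < A0c B := by
  rw [A0c]
  have := Rc_one_le hB
  have hq' : (0:ℝ) < q := Nat.cast_pos.mpr hq
  nlinarith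

lemma δc_pos (hq : 0 < q) (hB : ∀ i t, 0 < B i t) : 0 < δc B := by
  rw [δc]
  have h1 := Bmin_pos hB
  have h2 := Bmax_pos hB
  have h3 : (0:ℝ) < (n:ℝ) ^ q := by
    have : 0 < n := Nat.pos_of_ne_zero (NeZero.ne n)
    positivity
  positivity

lemma δc_lt_half (hq : 0 < q) (hB : ∀ i t, 0 < B i t) : δc B < 1 / 2 := by
  rw [δc]
  have h1 := Bmin_pos hB
  have h2 := Bmax_pos hB
  have hn' : (1:ℝ) ≤ (n:ℝ) := by exact_mod_cast Nat.one_le_iff_ne_zero.mpr (NeZero.ne n)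
  have h3 : (1:ℝ) ≤ (n:ℝ) ^ q := one_le_pow₀ hn'
  have e1 : Bmin B / Bmax B ≤ 1 := (div_le_one h2).mpr Bmin_le_Bmax
  have e2 : ((n:ℝ) ^ q)⁻¹ ≤ 1 := inv_le_one_of_one_le₀ h3
  have hqR : (1:ℝ) ≤ (q:ℝ) * Rc B := by
    have hq1 : (1:ℝ) ≤ (q:ℝ) := by exact_mod_cast hq
    have hR1 := Rc_one_le hB
    nlinarith
  have e3 : Real.exp (-((q:ℝ) * Rc B)) ≤ Real.exp (-1) := Real.exp_le_exp.mpr (by linarith)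
  have ehalf : Real.exp (-1) < 1 / 2 := by
    have h : (2:ℝ) < Real.exp 1 := lt_trans (by norm_num) Real.exp_one_gt_d9
    rw [Real.exp_neg]
    have : (Real.exp 1)⁻¹ < (2:ℝ)⁻¹ := inv_strictAnti₀ (by norm_num : (0:ℝ) < 2) h
    convert this using 1
    norm_num
  have hnn : (0:ℝ) ≤ Bmin B / Bmax B := le_of_lt (div_pos h1 h2)
  have hinv : (0:ℝ) ≤ ((n:ℝ) ^ q)⁻¹ := by positivity
  have hab : Bmin B / Bmax B * ((n:ℝ) ^ q)⁻¹ ≤ 1 := mul_le_one₀ e1 hinv e2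
  have habnn : (0:ℝ) ≤ Bmin B / Bmax B * ((n:ℝ) ^ q)⁻¹ := mul_nonneg hnn hinv
  calc Bmin B / Bmax B * ((n:ℝ) ^ q)⁻¹ * Real.exp (-((q:ℝ) * Rc B))
      ≤ 1 * Real.exp (-1) := mul_le_mul hab e3 (Real.exp_pos _).le (by norm_num)
    _ = Real.exp (-1) := one_mul _
    _ < 1 / 2 := ehalf

lemma c0c_pos (hq : 0 < q) (hB : ∀ i t, 0 < B i t) : 0 < c0c B := by
  rw [c0c]
  have hA := A0c_pos hq hB
  have hδ := δc_pos hq hB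
  have hexp : Real.exp (-(A0c B)) < 1 := Real.exp_lt_one_iff.mpr (by linarith)
  apply div_pos (mul_pos hδ (by linarith)) hA

lemma c0c_lt_half (hq : 0 < q) (hB : ∀ i t, 0 < B i t) : c0c B < 1 / 2 := by
  have hA := A0c_pos hq hB
  have hδ := δc_pos hq hB
  have hδh := δc_lt_half hq hB
  have h1 : -(A0c B) + 1 ≤ Real.exp (-(A0c B)) := Real.add_one_le_exp _
  have h2 : (1 - Real.exp (-(A0c B))) / A0c B ≤ 1 := by
    rw [div_le_one hA]; linarith
  have h3 : 0 ≤ (1 - Real.exp (-(A0c B))) / A0c B := by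
    have : Real.exp (-(A0c B)) < 1 := Real.exp_lt_one_iff.mpr (by linarith)
    apply div_nonneg (by linarith) hA.le
  calc c0c B = δc B * ((1 - Real.exp (-(A0c B))) / A0c B) := by rw [c0c]; ring
    _ ≤ δc B * 1 := mul_le_mul_of_nonneg_left h2 hδ.le
    _ < 1 / 2 := by linarith

lemma κc_pos (hq : 0 < q) (hB : ∀ i t, 0 < B i t) : 0 < κc B := by
  have := c0c_lt_half hq hB; rw [κc]; linarith

lemma κc_lt_one (hq : 0 < q) (hB : ∀ i t, 0 < B i t) : κc B < 1 := by
  have := c0c_pos hq hB; rw [κc]; linarith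

lemma chord_exp {a A : ℝ} (hA : 0 < A) (h0 : 0 ≤ a) (h1 : a ≤ A) :
    Real.exp (-a) ≤ 1 - (1 - Real.exp (-A)) * (a / A) := by
  have hw1 : 0 ≤ a / A := div_nonneg h0 hA.le
  have hw2 : a / A ≤ 1 := (div_le_one hA).mpr h1
  have hcx := convexOn_exp.2 (Set.mem_univ (0:ℝ)) (Set.mem_univ (-A))
    (by linarith : (0:ℝ) ≤ 1 - a / A) hw1 (by ring)
  simp only [smul_eq_mul, mul_zero, zero_add, mul_neg, Real.exp_zero] at hcx
  have hcanc : a / A * A = a := div_mul_cancel₀ a hA.ne'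
  rw [hcanc] at hcx
  linarith

set_option maxHeartbeats 1000000 in
lemma Hm_pointwise (hq : 0 < q) (hB : ∀ i t, 0 < B i t) (u v : Fin n → ℝ)
    (hu : osc u ≤ Rc B) (hv : osc v ≤ Rc B) (i : Fin n) :
    Hm B u i - Hm B v i ≤
      univ.sup' univ_nonempty (u - v) - c0c B * osc (u - v) := by
  have hq' : (0:ℝ) < q := Nat.cast_pos.mpr hq
  obtain ⟨k, _, hk⟩ := Finset.exists_mem_eq_inf' (univ_nonempty (α := Fin n)) (u - v)
  set M := univ.sup' univ_nonempty (u - v) with hM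
  set μ := univ.inf' univ_nonempty (u - v) with hμ
  have hoscd : osc (u - v) = M - μ := rfl
  have hMμ : μ ≤ M := by have := osc_nonneg (u - v); rw [hoscd] at this; linarith
  set tstar : Fin q → Fin n := fun _ => k with htstar
  set W : (Fin q → Fin n) → ℝ := fun t => B i t * Real.exp (∑ j, v (t j)) with hW
  have hWpos : ∀ t, 0 < W t := fun t => mul_pos (hB i t) (Real.exp_pos _)
  have hGv : Gm B v i = ∑ t, W t := rfl
  have hGu : Gm B u i = ∑ t : Fin q → Fin n, W t * Real.exp (∑ j, (u - v) (t j)) := by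
    rw [Gm]
    apply Finset.sum_congr rfl
    intro t _
    rw [hW]
    have he : (∑ k', u (t k')) = (∑ k', v (t k')) + (∑ k', (u - v) (t k')) := by
      rw [← Finset.sum_add_distrib]
      apply Finset.sum_congr rfl
      intro k' _
      simp
    rw [he, Real.exp_add]; ring
  have hcardq : ((univ : Finset (Fin q)).card : ℝ) = (q : ℝ) := by simp
  have hsum_le : ∀ t : Fin q → Fin n, (∑ j, (u - v) (t j)) ≤ (q:ℝ) * M := by
    intro t
    calc (∑ j, (u - v) (t j)) ≤ (univ : Finset (Fin q)).card • M :=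
        Finset.sum_le_card_nsmul _ _ _ (fun j _ => le_sup'_univ (u - v) (t j))
      _ = (q:ℝ) * M := by rw [nsmul_eq_mul, hcardq]
  have hsum_star : (∑ j, (u - v) (tstar j)) = (q:ℝ) * μ := by
    have : (∑ _j : Fin q, (u - v) k) = (univ : Finset (Fin q)).card • ((u - v) k) :=
      Finset.sum_const _
    rw [htstar]
    simp only []
    rw [this, nsmul_eq_mul, hcardq, ← hk]
  have hsplit : Gm B u i ≤
      (Gm B v i - W tstar) * Real.exp ((q:ℝ) * M) + W tstar * Real.exp ((q:ℝ) * μ) := by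
    have hsplit0 : (∑ t : Fin q → Fin n, W t * Real.exp (∑ j, (u - v) (t j)))
        = W tstar * Real.exp (∑ j, (u - v) (tstar j)) +
          ∑ t ∈ univ.erase tstar, W t * Real.exp (∑ j, (u - v) (t j)) :=
      (Finset.add_sum_erase univ _ (mem_univ tstar)).symm
    have h1 : (∑ t ∈ univ.erase tstar, W t * Real.exp (∑ j, (u - v) (t j)))
        ≤ (∑ t ∈ univ.erase tstar, W t) * Real.exp ((q:ℝ) * M) := by
      rw [Finset.sum_mul]
      apply Finset.sum_le_sum
      intro t _
      exact mul_le_mul_of_nonneg_left (Real.exp_le_exp.mpr (hsum_le t)) (hWpos t).le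
    have h2 : (∑ t ∈ univ.erase tstar, W t) = Gm B v i - W tstar := by
      have := Finset.add_sum_erase univ W (mem_univ tstar)
      rw [hGv]; linarith
    rw [hGu, hsplit0, hsum_star]
    rw [h2] at h1
    linarith
  have hsupv : ∀ t : Fin q → Fin n, (∑ j, v (t j)) ≤ (q:ℝ) * univ.sup' univ_nonempty v := by
    intro t
    calc (∑ j, v (t j)) ≤ (univ : Finset (Fin q)).card • (univ.sup' univ_nonempty v) :=
        Finset.sum_le_card_nsmul _ _ _ (fun j _ => le_sup'_univ v (t j))
      _ = _ := by rw [nsmul_eq_mul, hcardq]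
  have hcardT : ((Fintype.card (Fin q → Fin n) : ℕ) : ℝ) = (n:ℝ) ^ q := by
    rw [Fintype.card_fun]
    push_cast [Fintype.card_fin]
    ring
  have hGv_le : Gm B v i ≤ (n:ℝ) ^ q * (Bmax B * Real.exp ((q:ℝ) * univ.sup' univ_nonempty v)) := by
    rw [hGv]
    calc (∑ t, W t) ≤ (univ : Finset (Fin q → Fin n)).card •
          (Bmax B * Real.exp ((q:ℝ) * univ.sup' univ_nonempty v)) := by
          apply Finset.sum_le_card_nsmul
          intro t _
          rw [hW]
          exact mul_le_mul (le_Bmax i t) (Real.exp_le_exp.mpr (hsupv t)) (Real.exp_pos _).le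
            (le_trans (Bmin_pos hB).le Bmin_le_Bmax)
      _ = _ := by rw [nsmul_eq_mul, Finset.card_univ, hcardT]
  have hWstar_ge : Bmin B * Real.exp ((q:ℝ) * univ.inf' univ_nonempty v) ≤ W tstar := by
    rw [hW]
    have hsv : (q:ℝ) * univ.inf' univ_nonempty v ≤ ∑ j, v (tstar j) := by
      rw [htstar]
      have : (∑ _j : Fin q, v k) = (univ : Finset (Fin q)).card • (v k) := Finset.sum_const _
      simp only []
      rw [this, nsmul_eq_mul, hcardq]
      exact mul_le_mul_of_nonneg_left (inf'_le_univ v k) hq'.le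
    exact mul_le_mul (Bmin_le i tstar) (Real.exp_le_exp.mpr hsv) (Real.exp_pos _).le
      (hB i tstar).le
  have hθ : δc B * Gm B v i ≤ W tstar := by
    have hδ := δc_pos hq hB
    have h3 := mul_le_mul_of_nonneg_left hGv_le hδ.le
    have hBmaxne : Bmax B ≠ 0 := (Bmax_pos hB).ne'
    have hnq : ((n:ℝ) ^ q) ≠ 0 := by
      have : (0:ℝ) < (n:ℝ) := Nat.cast_pos.mpr (Nat.pos_of_ne_zero (NeZero.ne n))
      positivity
    have h4 : δc B * ((n:ℝ) ^ q * (Bmax B * Real.exp ((q:ℝ) * univ.sup' univ_nonempty v)))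
        = Bmin B * (Real.exp (-((q:ℝ) * Rc B)) * Real.exp ((q:ℝ) * univ.sup' univ_nonempty v)) := by
      rw [δc]
      field_simp
    have h5 : Real.exp (-((q:ℝ) * Rc B)) * Real.exp ((q:ℝ) * univ.sup' univ_nonempty v)
        = Real.exp ((q:ℝ) * univ.sup' univ_nonempty v - (q:ℝ) * Rc B) := by
      rw [← Real.exp_add]; ring_nf
    have hov : univ.sup' univ_nonempty v - univ.inf' univ_nonempty v ≤ Rc B := hv
    have h6 : (q:ℝ) * univ.sup' univ_nonempty v - (q:ℝ) * Rc B ≤ (q:ℝ) * univ.inf' univ_nonempty v := by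
      nlinarith
    have h7 : Bmin B * (Real.exp (-((q:ℝ) * Rc B)) * Real.exp ((q:ℝ) * univ.sup' univ_nonempty v))
        ≤ Bmin B * Real.exp ((q:ℝ) * univ.inf' univ_nonempty v) := by
      rw [h5]
      exact mul_le_mul_of_nonneg_left (Real.exp_le_exp.mpr h6) (Bmin_pos hB).le
    calc δc B * Gm B v i ≤ δc B * ((n:ℝ) ^ q * (Bmax B * Real.exp ((q:ℝ) * univ.sup' univ_nonempty v))) := h3
      _ = Bmin B * (Real.exp (-((q:ℝ) * Rc B)) * Real.exp ((q:ℝ) * univ.sup' univ_nonempty v)) := h4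
      _ ≤ Bmin B * Real.exp ((q:ℝ) * univ.inf' univ_nonempty v) := h7
      _ ≤ W tstar := hWstar_ge
  have hcomb : Gm B u i ≤
      Gm B v i * ((1 - δc B) * Real.exp ((q:ℝ) * M) + δc B * Real.exp ((q:ℝ) * μ)) := by
    have hee : Real.exp ((q:ℝ) * μ) ≤ Real.exp ((q:ℝ) * M) :=
      Real.exp_le_exp.mpr (by nlinarith)
    have h7 := mul_le_mul_of_nonneg_right hθ (sub_nonneg.mpr hee)
    nlinarith [hsplit]
  set a : ℝ := (q:ℝ) * (M - μ) with ha
  have ha0 : 0 ≤ a := by rw [ha]; nlinarith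
  have hA := A0c_pos hq hB
  have haA : a ≤ A0c B := by
    have h8 : M - μ ≤ 2 * Rc B := by
      have h9 := osc_sub_le u v
      rw [hoscd] at h9; linarith
    rw [ha, A0c]; nlinarith
  have hchord : Real.exp (-a) ≤ 1 - (1 - Real.exp (-(A0c B))) * (a / A0c B) :=
    chord_exp hA ha0 haA
  have hδ := δc_pos hq hB
  have hδh := δc_lt_half hq hB
  have hin : (1 - δc B) + δc B * Real.exp (-a) ≤ 1 - c0c B * a := by
    have h9 := mul_le_mul_of_nonneg_left hchord hδ.le
    have h10 : c0c B * a = δc B * ((1 - Real.exp (-(A0c B))) * (a / A0c B)) := by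
      rw [c0c]; field_simp
    nlinarith
  have hpos2 : 0 < 1 - c0c B * a := by
    have hc0 := c0c_pos hq hB
    have h11 : c0c B * a ≤ c0c B * A0c B := mul_le_mul_of_nonneg_left haA hc0.le
    have h12 : c0c B * A0c B = δc B * (1 - Real.exp (-(A0c B))) := by
      rw [c0c]; field_simp
    have hexp1 : 0 < Real.exp (-(A0c B)) := Real.exp_pos _
    nlinarith
  have hGpos := Gm_pos hB u i
  have hGvpos := Gm_pos hB v i
  have hstuffpos : 0 < (1 - δc B) * Real.exp ((q:ℝ) * M) + δc B * Real.exp ((q:ℝ) * μ) := by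
    nlinarith [Real.exp_pos ((q:ℝ) * M), Real.exp_pos ((q:ℝ) * μ)]
  have hfac : (1 - δc B) * Real.exp ((q:ℝ)*M) + δc B * Real.exp ((q:ℝ)*μ)
      = Real.exp ((q:ℝ)*M) * ((1 - δc B) + δc B * Real.exp (-a)) := by
    have he2 : Real.exp ((q:ℝ)*μ) = Real.exp ((q:ℝ)*M) * Real.exp (-a) := by
      rw [← Real.exp_add, ha]; ring_nf
    rw [he2]; ring
  have h13 : (1 - δc B) * Real.exp ((q:ℝ)*M) + δc B * Real.exp ((q:ℝ)*μ)
      ≤ Real.exp ((q:ℝ)*M) * (1 - c0c B * a) := by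
    rw [hfac]
    exact mul_le_mul_of_nonneg_left hin (Real.exp_pos _).le
  have hlog1 : Real.log (Gm B u i) ≤
      Real.log (Gm B v i) + ((q:ℝ) * M + Real.log (1 - c0c B * a)) := by
    have h12 := Real.log_le_log hGpos hcomb
    rw [Real.log_mul hGvpos.ne' hstuffpos.ne'] at h12
    have h14 := Real.log_le_log hstuffpos h13
    rw [Real.log_mul (Real.exp_pos _).ne' hpos2.ne', Real.log_exp] at h14
    linarith
  have h15 : Real.log (1 - c0c B * a) ≤ - (c0c B * a) := by
    have := Real.log_le_sub_one_of_pos hpos2; linarith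
  have hHdiff : Hm B u i - Hm B v i = (Real.log (Gm B u i) - Real.log (Gm B v i)) / q := by
    rw [Hm, Hm]; ring
  rw [hHdiff, hoscd]
  have h16 : (Real.log (Gm B u i) - Real.log (Gm B v i)) / q ≤ ((q:ℝ)*M - c0c B * a)/q :=
    (div_le_div_iff_of_pos_right hq').mpr (by linarith)
  have h17 : ((q:ℝ)*M - c0c B * a)/q = M - c0c B * (M - μ) := by
    rw [ha]; field_simp
  rw [h17] at h16
  exact h16

lemma osc_Hm_sub_le (hq : 0 < q) (hB : ∀ i t, 0 < B i t) (u v : Fin n → ℝ)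
    (hu : osc u ≤ Rc B) (hv : osc v ≤ Rc B) :
    osc (Hm B u - Hm B v) ≤ κc B * osc (u - v) := by
  have hvu : v - u = fun i => -((u - v) i) := by funext i; simp
  have hsup_vu : univ.sup' univ_nonempty (v - u) = - univ.inf' univ_nonempty (u - v) := by
    rw [hvu]; exact sup'_neg_eq (u - v)
  have hosc_vu : osc (v - u) = osc (u - v) := by
    rw [osc, osc, hvu, sup'_neg_eq, inf'_neg_eq]; ring
  have hκ : κc B = 1 - 2 * c0c B := rfl
  have hoscd : osc (u - v) =
      univ.sup' univ_nonempty (u - v) - univ.inf' univ_nonempty (u - v) := rfl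
  apply osc_le
  intro i j
  have h1 := Hm_pointwise hq hB u v hu hv i
  have h2 := Hm_pointwise hq hB v u hv hu j
  rw [hsup_vu, hosc_vu] at h2
  have hκosc : κc B * osc (u - v) = osc (u - v) - 2 * (c0c B * osc (u - v)) := by
    rw [hκ]; ring
  simp only [Pi.sub_apply]
  linarith

noncomputable def Tm (B : Fin n → (Fin q → Fin n) → ℝ) (u : Fin n → ℝ) : Fin n → ℝ :=
  fun i => Hm B u i - Hm B u ⟨0, Nat.pos_of_ne_zero (NeZero.ne n)⟩

lemma Tm_zero (u : Fin n → ℝ) : Tm B u ⟨0, Nat.pos_of_ne_zero (NeZero.ne n)⟩ = 0 := by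
  rw [Tm]; exact sub_self _

lemma Tm_osc (hq : 0 < q) (hB : ∀ i t, 0 < B i t) (u : Fin n → ℝ) :
    osc (Tm B u) ≤ Rc B := by
  have h1 : osc (Tm B u) = osc (Hm B u) := osc_shift (Hm B u) _
  rw [h1]; exact osc_Hm_le hq hB u

lemma Tm_sub_osc (hq : 0 < q) (hB : ∀ i t, 0 < B i t) (u v : Fin n → ℝ)
    (hu : osc u ≤ Rc B) (hv : osc v ≤ Rc B) :
    osc (Tm B u - Tm B v) ≤ κc B * osc (u - v) := by
  have h0 : Tm B u - Tm B v = fun i => (Hm B u - Hm B v) i -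
      (Hm B u ⟨0, Nat.pos_of_ne_zero (NeZero.ne n)⟩ - Hm B v ⟨0, Nat.pos_of_ne_zero (NeZero.ne n)⟩) := by
    funext i; simp [Tm]; ring
  rw [h0, osc_shift (Hm B u - Hm B v)]
  exact osc_Hm_sub_le hq hB u v hu hv

lemma exists_Tm_fixed (hq : 0 < q) (hB : ∀ i t, 0 < B i t) :
    ∃ u : Fin n → ℝ, Tm B u = u := by
  classical
  have hn : 0 < n := Nat.pos_of_ne_zero (NeZero.ne n)
  set i0 : Fin n := ⟨0, hn⟩ with hi0
  set C : Set (Fin n → ℝ) := {u | u i0 = 0} ∩ {u | osc u ≤ Rc B} with hC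
  have hclosed : IsClosed C :=
    IsClosed.inter (isClosed_eq (continuous_apply i0) continuous_const) (isClosed_osc_le (Rc B))
  have h0C : (0 : Fin n → ℝ) ∈ C := by
    constructor
    · rfl
    · show osc (0 : Fin n → ℝ) ≤ Rc B
      have : osc (0 : Fin n → ℝ) ≤ 0 := osc_le (fun i j => by simp)
      linarith [Rc_one_le (B := B) hB]
  haveI : Nonempty C := ⟨⟨0, h0C⟩⟩
  haveI : CompleteSpace C := hclosed.completeSpace_coe
  have hTmem : ∀ u : Fin n → ℝ, Tm B u ∈ C := fun u => ⟨Tm_zero u, Tm_osc hq hB u⟩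
  set f : C → C := fun a => ⟨Tm B a.1, hTmem a.1⟩ with hf
  have hκ0 : 0 < κc B := κc_pos hq hB
  have hκ1 : κc B < 1 := κc_lt_one hq hB
  obtain ⟨N, hN⟩ : ∃ N, (κc B) ^ N < 1 / 2 :=
    exists_pow_lt_of_lt_one (by norm_num) hκ1
  have hosc_iter : ∀ (k : ℕ) (a b : C),
      osc ((f^[k] a).1 - (f^[k] b).1) ≤ κc B ^ k * osc (a.1 - b.1) := by
    intro k
    induction k with
    | zero => intro a b; simp
    | succ k ih =>
      intro a b
      have h1 : f^[k + 1] a = f (f^[k] a) := Function.iterate_succ_apply' f k a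
      have h2 : f^[k + 1] b = f (f^[k] b) := Function.iterate_succ_apply' f k b
      rw [h1, h2]
      have h3 : osc ((f (f^[k] a)).1 - (f (f^[k] b)).1) ≤
          κc B * osc ((f^[k] a).1 - (f^[k] b).1) :=
        Tm_sub_osc hq hB _ _ (f^[k] a).2.2 (f^[k] b).2.2
      calc osc ((f (f^[k] a)).1 - (f (f^[k] b)).1)
          ≤ κc B * osc ((f^[k] a).1 - (f^[k] b).1) := h3
        _ ≤ κc B * (κc B ^ k * osc (a.1 - b.1)) :=
            mul_le_mul_of_nonneg_left (ih a b) hκ0.le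
        _ = κc B ^ (k + 1) * osc (a.1 - b.1) := by ring
  have hdist_le_osc : ∀ a b : C, dist a b ≤ osc (a.1 - b.1) := by
    intro a b
    rw [Subtype.dist_eq]
    apply (dist_pi_le_iff (osc_nonneg _)).mpr
    intro i
    rw [Real.dist_eq]
    have h4 : (a.1 - b.1) i0 = 0 := by
      simp only [Pi.sub_apply]
      rw [a.2.1, b.2.1, sub_zero]
    have := abs_sub_le_osc (a.1 - b.1) i i0
    rw [h4, sub_zero] at this
    simpa using this
  have hosc_le_dist : ∀ a b : C, osc (a.1 - b.1) ≤ 2 * dist a b := by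
    intro a b
    rw [Subtype.dist_eq]
    exact osc_le_two_dist a.1 b.1
  set K : NNReal := (2 * κc B ^ N).toNNReal with hK
  have hKnn : (0:ℝ) ≤ 2 * κc B ^ N := by positivity
  have hKcoe : (K : ℝ) = 2 * κc B ^ N := Real.coe_toNNReal _ hKnn
  have hg : ContractingWith K (f^[N]) := by
    constructor
    · rw [← NNReal.coe_lt_coe, hKcoe]
      norm_num
      linarith
    · apply LipschitzWith.of_dist_le_mul
      intro a b
      rw [hKcoe]
      calc dist (f^[N] a) (f^[N] b) ≤ osc ((f^[N] a).1 - (f^[N] b).1) := hdist_le_osc _ _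
        _ ≤ κc B ^ N * osc (a.1 - b.1) := hosc_iter N a b
        _ ≤ κc B ^ N * (2 * dist a b) :=
            mul_le_mul_of_nonneg_left (hosc_le_dist a b) (by positivity)
        _ = 2 * κc B ^ N * dist a b := by ring
  set z : C := ContractingWith.fixedPoint (f^[N]) hg with hz
  have hzfix : Function.IsFixedPt (f^[N]) z := ContractingWith.fixedPoint_isFixedPt hg
  have hfzfix : Function.IsFixedPt (f^[N]) (f z) := by
    show f^[N] (f z) = f z
    have h5 : f^[N] (f z) = f^[N + 1] z := (Function.iterate_succ_apply f N z).symm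
    have h6 : f^[N + 1] z = f (f^[N] z) := Function.iterate_succ_apply' f N z
    rw [h5, h6, hzfix]
  have h7 : f z = z := by
    have h8 := ContractingWith.fixedPoint_unique hg hfzfix
    have h9 := ContractingWith.fixedPoint_unique hg hzfix
    rw [h8, ← h9]
  exact ⟨z.1, congrArg Subtype.val h7⟩

lemma exists_pos_eig_of_NeZero (hq : 0 < q) (hB : ∀ i t, 0 < B i t) :
    ∃ (lam : ℝ) (x : Fin n → ℝ), 0 < lam ∧ (∀ i, 0 < x i) ∧
      ∀ i, (∑ t : Fin q → Fin n, B i t * ∏ k, x (t k)) = lam * x i ^ q := by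
  obtain ⟨u, hu⟩ := exists_Tm_fixed hq hB
  have hq' : (0:ℝ) < q := Nat.cast_pos.mpr hq
  set c : ℝ := Hm B u ⟨0, Nat.pos_of_ne_zero (NeZero.ne n)⟩ with hc
  have hHu : ∀ i, Hm B u i = u i + c := by
    intro i
    have h1 : Hm B u i - c = u i := congrFun hu i
    linarith
  refine ⟨Real.exp (q * c), fun i => Real.exp (u i), Real.exp_pos _, fun i => Real.exp_pos _, ?_⟩
  intro i
  have hG : Gm B u i = Real.exp ((q:ℝ) * (u i + c)) := by
    have h1 : Real.log (Gm B u i) = (q:ℝ) * (u i + c) := by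
      have h2 := hHu i
      rw [Hm] at h2
      field_simp at h2
      linarith
    rw [← h1, Real.exp_log (Gm_pos hB u i)]
  have hGt : Gm B u i = ∑ t : Fin q → Fin n, B i t * ∏ k, Real.exp (u (t k)) := by
    rw [Gm]
    apply Finset.sum_congr rfl
    intro t _
    rw [Real.exp_sum]
  have hsplit : Real.exp ((q:ℝ) * (u i + c)) = Real.exp ((q:ℝ) * c) * Real.exp (u i) ^ q := by
    rw [← Real.exp_nat_mul, ← Real.exp_add]
    ring_nf
  rw [← hGt, hG, hsplit]

end posTensor

lemma exists_pos_eig (n q : ℕ) (hn : 0 < n) (hq : 0 < q)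
    (B : Fin n → (Fin q → Fin n) → ℝ) (hB : ∀ i t, 0 < B i t) :
    ∃ (lam : ℝ) (x : Fin n → ℝ), 0 < lam ∧ (∀ i, 0 < x i) ∧
      ∀ i, (∑ t : Fin q → Fin n, B i t * ∏ k, x (t k)) = lam * x i ^ q := by
  haveI : NeZero n := ⟨hn.ne'⟩
  exact exists_pos_eig_of_NeZero hq hB



lemma lipschitz_sup' {n : ℕ} [NeZero n] :
    LipschitzWith 1 (fun u : Fin n → ℝ => univ.sup' univ_nonempty u) := by
  apply LipschitzWith.of_dist_le_mul
  intro u v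
  have key : ∀ a b : Fin n → ℝ,
      univ.sup' univ_nonempty a - univ.sup' univ_nonempty b ≤ dist a b := by
    intro a b
    have h1 : univ.sup' univ_nonempty a ≤ univ.sup' univ_nonempty b + dist a b := by
      apply Finset.sup'_le
      intro i _
      have h2 : dist (a i) (b i) ≤ dist a b := dist_le_pi_dist a b i
      rw [Real.dist_eq] at h2
      have h3 := (abs_le.mp h2).2
      have h4 : b i ≤ univ.sup' univ_nonempty b := Finset.le_sup' b (mem_univ i)
      linarith
    linarith
  rw [Real.dist_eq, NNReal.coe_one, one_mul, abs_le]
  constructor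
  · have := key v u; rw [dist_comm] at this; linarith
  · have := key u v; linarith

lemma exists_norm_eig (n q : ℕ) (hn : 0 < n) (hq : 0 < q)
    (B : Fin n → (Fin q → Fin n) → ℝ) (hB : ∀ i t, 0 < B i t) :
    ∃ (lam : ℝ) (y : Fin n → ℝ), 0 < lam ∧ (∀ i, 0 < y i) ∧ (∀ i, y i ≤ 1) ∧
      (∃ i0, y i0 = 1) ∧
      ∀ i, (∑ t : Fin q → Fin n, B i t * ∏ k, y (t k)) = lam * y i ^ q := by
  obtain ⟨lam, x, hlam, hx, heq⟩ := exists_pos_eig n q hn hq B hB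
  have hne : (univ : Finset (Fin n)).Nonempty := ⟨⟨0, hn⟩, mem_univ _⟩
  obtain ⟨istar, _, hisup⟩ := Finset.exists_mem_eq_sup' hne x
  set S : ℝ := univ.sup' hne x with hS
  have hSpos : 0 < S := by rw [hisup]; exact hx istar
  have hSq : (0:ℝ) < S ^ q := pow_pos hSpos q
  refine ⟨lam, fun i => x i / S, hlam, fun i => div_pos (hx i) hSpos,
    fun i => (div_le_one hSpos).mpr (Finset.le_sup' x (mem_univ i)), ⟨istar, ?_⟩, ?_⟩
  · show x istar / S = 1
    rw [← hisup]
    exact div_self hSpos.ne'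
  · intro i
    have hterm : ∀ t : Fin q → Fin n, (∏ k, x (t k) / S) = (∏ k, x (t k)) / S ^ q := by
      intro t
      rw [Finset.prod_div_distrib, Finset.prod_const]
      congr 1
      rw [Finset.card_univ, Fintype.card_fin]
    calc (∑ t : Fin q → Fin n, B i t * ∏ k, x (t k) / S)
        = ∑ t : Fin q → Fin n, (B i t * ∏ k, x (t k)) / S ^ q := by
          apply Finset.sum_congr rfl
          intro t _
          rw [hterm t, mul_div_assoc]
      _ = (∑ t : Fin q → Fin n, B i t * ∏ k, x (t k)) / S ^ q := by rw [← Finset.sum_div]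
      _ = (lam * x i ^ q) / S ^ q := by rw [heq i]
      _ = lam * (x i / S) ^ q := by rw [div_pow, mul_div_assoc]

lemma sInf_le_specRad_main (m n : ℕ) (hm : 2 ≤ m) (hn : 0 < n)
    (A : Fin n → (Fin (m - 1) → Fin n) → ℝ) (hA : ∀ i t, 0 ≤ A i t)
    (hall : ∀ i, ∃ t : Fin (m - 1) → Fin n, A i t ≠ 0) :
    sInf (circSet m n A) ≤ specRad m n A := by
  classical
  haveI : NeZero n := ⟨hn.ne'⟩
  have hq : 0 < m - 1 := by omega
  have hne : (univ : Finset (Fin n)).Nonempty := univ_nonempty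
  -- ε-perturbed eigenpairs
  have hk : ∀ k : ℕ, ∃ (lam : ℝ) (y : Fin n → ℝ), 0 < lam ∧ (∀ i, 0 < y i) ∧
      (∀ i, y i ≤ 1) ∧ (∃ i0, y i0 = 1) ∧
      ∀ i, (∑ t : Fin (m - 1) → Fin n, (A i t + 1 / ((k:ℝ) + 1)) * ∏ j, y (t j))
        = lam * y i ^ (m - 1) := by
    intro k
    apply exists_norm_eig n (m - 1) hn hq
    intro i t
    have := hA i t
    positivity
  choose lam y hlam hypos hyle hyone heqk using hk
  -- upper bound on lam
  set Λ : ℝ := univ.sup' hne (fun i => ∑ t : Fin (m - 1) → Fin n, (A i t + 1)) with hΛ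
  have hlamle : ∀ k, lam k ≤ Λ := by
    intro k
    obtain ⟨i0, hi0⟩ := hyone k
    have h1 : lam k = ∑ t : Fin (m - 1) → Fin n, (A i0 t + 1 / ((k:ℝ) + 1)) * ∏ j, y k (t j) := by
      rw [heqk k i0, hi0, one_pow, mul_one]
    have h2 : (∑ t : Fin (m - 1) → Fin n, (A i0 t + 1 / ((k:ℝ) + 1)) * ∏ j, y k (t j))
        ≤ ∑ t : Fin (m - 1) → Fin n, (A i0 t + 1) := by
      apply Finset.sum_le_sum
      intro t _
      have hp1 : (∏ j, y k (t j)) ≤ 1 :=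
        Finset.prod_le_one (fun j _ => (hypos k (t j)).le) (fun j _ => hyle k (t j))
      have hp0 : (0:ℝ) ≤ ∏ j, y k (t j) := Finset.prod_nonneg (fun j _ => (hypos k (t j)).le)
      have hε1 : 1 / ((k:ℝ) + 1) ≤ 1 := by
        rw [div_le_one (by positivity)]
        have : (0:ℝ) ≤ (k:ℝ) := Nat.cast_nonneg k
        linarith
      have hεpos : (0:ℝ) < 1 / ((k:ℝ) + 1) := by positivity
      have := hA i0 t
      nlinarith
    rw [h1]
    exact h2.trans (Finset.le_sup' (fun i => ∑ t : Fin (m - 1) → Fin n, (A i t + 1)) (mem_univ i0))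
  -- argmin successor and chain bound per k
  have hNne : ∀ i, ∃ j, tArc m n A i j := by
    intro i
    obtain ⟨t, ht⟩ := hall i
    exact ⟨t ⟨0, hq⟩, t, ht, ⟨_, rfl⟩⟩
  have hlow : ∀ k, sInf (circSet m n A) ≤ lam k := by
    intro k
    have hmin : ∀ i, ∃ j, tArc m n A i j ∧ ∀ j', tArc m n A i j' → y k j ≤ y k j' := by
      intro i
      obtain ⟨j0, hj0⟩ := hNne i
      obtain ⟨j, hjmem, hjmin⟩ := Finset.exists_min_image
        (univ.filter fun j => tArc m n A i j) (y k) ⟨j0, by simp [hj0]⟩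
      exact ⟨j, (mem_filter.mp hjmem).2, fun j' hj' => hjmin j' (by simp [hj'])⟩
    set s : Fin n → Fin n := fun i => (hmin i).choose with hs
    have hstep : ∀ i, sliceSum m n A i * y k (s i) ^ (m - 1) ≤ lam k * y k i ^ (m - 1) := by
      intro i
      have hspec := (hmin i).choose_spec
      have h2 : (∑ t : Fin (m - 1) → Fin n, A i t * y k (s i) ^ (m - 1))
          ≤ ∑ t : Fin (m - 1) → Fin n, A i t * ∏ j, y k (t j) := by
        apply Finset.sum_le_sum
        intro t _
        rcases eq_or_ne (A i t) 0 with h | h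
        · simp [h]
        · have hprod : y k (s i) ^ (m - 1) ≤ ∏ j, y k (t j) := by
            have hconst : (∏ _j : Fin (m - 1), y k (s i)) = y k (s i) ^ (m - 1) := by
              rw [Finset.prod_const]
              congr 1
              rw [Finset.card_univ, Fintype.card_fin]
            rw [← hconst]
            apply Finset.prod_le_prod (fun j _ => (hypos k (s i)).le)
            intro j _
            exact hspec.2 (t j) ⟨t, h, ⟨j, rfl⟩⟩
          exact mul_le_mul_of_nonneg_left hprod (hA i t)
      have h3 : (∑ t : Fin (m - 1) → Fin n, A i t * ∏ j, y k (t j))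
          ≤ ∑ t : Fin (m - 1) → Fin n, (A i t + 1 / ((k:ℝ) + 1)) * ∏ j, y k (t j) := by
        apply Finset.sum_le_sum
        intro t _
        have hp0 : (0:ℝ) ≤ ∏ j, y k (t j) := Finset.prod_nonneg (fun j _ => (hypos k (t j)).le)
        have hεpos : (0:ℝ) < 1 / ((k:ℝ) + 1) := by positivity
        nlinarith
      have h4 : sliceSum m n A i * y k (s i) ^ (m - 1)
          = ∑ t : Fin (m - 1) → Fin n, A i t * y k (s i) ^ (m - 1) := by
        rw [sliceSum, Finset.sum_mul]
      rw [h4, ← heqk k i]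
      exact h2.trans h3
    obtain ⟨p, γ, hcir, hγs, _⟩ := exists_circuit_iter (tArc m n A) s (fun _ => True)
      (fun _ _ => trivial) (fun i _ => (hmin i).choose_spec.1) ⟨0, hn⟩ trivial
    have hpow : (∏ j ∈ range p, sliceSum m n A (γ j)) ≤ lam k ^ p := by
      apply chain_le_pow γ p hcir.2.1 _ (fun i => y k i ^ (m - 1)) _ (hlam k).le
        (fun i => sliceSum_nonneg m n A hA i) (fun j => pow_pos (hypos k _) _)
      intro j hj
      rw [hγs j]
      exact hstep (γ j)
    have hmemS : (∏ j ∈ range p, sliceSum m n A (γ j)) ^ ((p:ℝ)⁻¹) ∈ circSet m n A :=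
      ⟨p, γ, hcir, rfl⟩
    have hbdd : BddBelow (circSet m n A) := ⟨0, fun r hr => circSet_nonneg m n A hA r hr⟩
    exact (csInf_le hbdd hmemS).trans (rpow_le_imp_of_pow_le
      (Finset.prod_nonneg fun j _ => sliceSum_nonneg m n A hA _) (hlam k).le hcir.1 hpow)
  -- compactness and limit
  set P : ℕ → ℝ × (Fin n → ℝ) := fun k => (lam k, y k) with hP
  have hPmem : ∀ k, P k ∈ Set.Icc ((0:ℝ), (0 : Fin n → ℝ)) (Λ, 1) := by
    intro k
    rw [Set.mem_Icc]
    constructor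
    · exact ⟨(hlam k).le, fun i => (hypos k i).le⟩
    · exact ⟨hlamle k, fun i => hyle k i⟩
  obtain ⟨L, hmemL, φ, hφ, htend⟩ := (isCompact_Icc).tendsto_subseq hPmem
  obtain ⟨lamL, yL⟩ := L
  have htl : Tendsto (fun k => lam (φ k)) atTop (𝓝 lamL) :=
    (continuous_fst.tendsto _).comp htend
  have htys : Tendsto (fun k => y (φ k)) atTop (𝓝 yL) :=
    (continuous_snd.tendsto _).comp htend
  have hty : ∀ j, Tendsto (fun k => y (φ k) j) atTop (𝓝 (yL j)) :=
    fun j => tendsto_pi_nhds.mp htys j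
  have hε : Tendsto (fun k : ℕ => 1 / ((φ k : ℝ) + 1)) atTop (𝓝 0) :=
    tendsto_one_div_add_atTop_nhds_zero_nat.comp hφ.tendsto_atTop
  have heqL : ∀ i, (∑ t : Fin (m - 1) → Fin n, A i t * ∏ j, yL (t j))
      = lamL * yL i ^ (m - 1) := by
    intro i
    have hLHS : Tendsto
        (fun k => ∑ t : Fin (m - 1) → Fin n, (A i t + 1 / ((φ k : ℝ) + 1)) * ∏ j, y (φ k) (t j))
        atTop (𝓝 (∑ t : Fin (m - 1) → Fin n, (A i t + 0) * ∏ j, yL (t j))) := by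
      apply tendsto_finset_sum
      intro t _
      exact (tendsto_const_nhds.add hε).mul
        (tendsto_finset_prod _ (fun j _ => hty (t j)))
    have hRHS : Tendsto (fun k => lam (φ k) * y (φ k) i ^ (m - 1)) atTop
        (𝓝 (lamL * yL i ^ (m - 1))) := htl.mul ((hty i).pow _)
    have heq2 : (fun k => ∑ t : Fin (m - 1) → Fin n,
        (A i t + 1 / ((φ k : ℝ) + 1)) * ∏ j, y (φ k) (t j))
        = fun k => lam (φ k) * y (φ k) i ^ (m - 1) := funext fun k => heqk (φ k) i
    rw [heq2] at hLHS
    have h10 := tendsto_nhds_unique hLHS hRHS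
    simpa using h10
  have hL1 : sInf (circSet m n A) ≤ lamL :=
    ge_of_tendsto htl (Filter.Eventually.of_forall (fun k => hlow (φ k)))
  -- some coordinate of yL equals 1
  have hsup1 : ∀ k, univ.sup' univ_nonempty (y (φ k)) = 1 := by
    intro k
    apply le_antisymm
    · exact Finset.sup'_le _ _ (fun i _ => hyle (φ k) i)
    · obtain ⟨i0, hi0⟩ := hyone (φ k)
      rw [← hi0]
      exact Finset.le_sup' (y (φ k)) (mem_univ i0)
  have hsupL : univ.sup' univ_nonempty yL = 1 := by
    have hcont := (lipschitz_sup' (n := n)).continuous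
    have h5 : Tendsto (fun k => univ.sup' univ_nonempty (y (φ k))) atTop
        (𝓝 (univ.sup' univ_nonempty yL)) := (hcont.tendsto yL).comp htys
    have h6 : Tendsto (fun k => univ.sup' univ_nonempty (y (φ k))) atTop (𝓝 1) := by
      simp only [hsup1]
      exact tendsto_const_nhds
    exact tendsto_nhds_unique h5 h6
  obtain ⟨iW, _, hiW⟩ := Finset.exists_mem_eq_sup' (univ_nonempty (α := Fin n)) yL
  have hyW : yL iW = 1 := by rw [← hiW, hsupL]
  have hlamL0 : 0 ≤ lamL := hmemL.1.1
  have hEig : IsEig m n A (lamL : ℂ) := by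
    refine ⟨fun i => (yL i : ℂ), ?_, ?_⟩
    · intro h
      have h7 := congrFun h iW
      rw [hyW] at h7
      simp at h7
    · intro i
      have h8 := heqL i
      have h9 := congrArg (fun r : ℝ => (r : ℂ)) h8
      push_cast at h9
      exact h9
  have hbddE : BddAbove {r : ℝ | ∃ lam' : ℂ, IsEig m n A lam' ∧ ‖lam'‖ = r} :=
    ⟨sSup (circSet m n A), by rintro r ⟨l, hl, rfl⟩; exact abs_eig_le m n hm hn A hA hl⟩
  have hfin : lamL ≤ specRad m n A := by
    apply le_csSup hbddE
    exact ⟨(lamL : ℂ), hEig, by rw [Complex.norm_real, Real.norm_of_nonneg hlamL0]⟩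
  linarith

section degenerate

lemma degenerate_case (m n : ℕ) (hm : 2 ≤ m) (hn : 0 < n)
    (A : Fin n → (Fin (m - 1) → Fin n) → ℝ)
    (hirr : StronglyConnected (tArc m n A))
    (i : Fin n) (hi : ∀ t, A i t = 0) :
    circSet m n A = ∅ ∧ specRad m n A = 0 := by
  have hallei : ∀ j : Fin n, j = i := by
    intro j
    by_contra hji
    have h1 := hirr i j
    rcases Relation.ReflTransGen.cases_head h1 with h2 | ⟨c, hc, _⟩
    · exact hji h2.symm
    · obtain ⟨t, ht, _⟩ := hc
      exact ht (hi t)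
  constructor
  · rw [Set.eq_empty_iff_forall_notMem]
    rintro r ⟨p, γ, hcir, _⟩
    obtain ⟨t, ht, _⟩ := hcir.2.2 0 hcir.1
    have h2 : γ 0 = i := hallei _
    rw [h2] at ht
    exact ht (hi t)
  · have hsub : ∀ r ∈ {r : ℝ | ∃ lam : ℂ, IsEig m n A lam ∧ ‖lam‖ = r}, r ≤ 0 := by
      rintro r ⟨lam, ⟨x, hx0, heq⟩, rfl⟩
      obtain ⟨i1, hi1⟩ : ∃ i1, x i1 ≠ 0 := by
        by_contra h; push_neg at h; exact hx0 (funext h)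
      have h3 := heq i1
      have h4 : (i1 : Fin n) = i := hallei _
      have h5 : ∀ t : Fin (m - 1) → Fin n, (A i1 t : ℂ) = 0 := by
        intro t; rw [h4, hi t, Complex.ofReal_zero]
      rw [Finset.sum_eq_zero (fun t _ => by rw [h5 t, zero_mul])] at h3
      have h6 : x i1 ^ (m - 1) ≠ 0 := pow_ne_zero _ hi1
      have h7 : lam = 0 := by
        rcases mul_eq_zero.mp h3.symm with h | h
        · exact h
        · exact absurd h h6
      rw [h7]
      simp
    have hmem0 : (0:ℝ) ∈ {r : ℝ | ∃ lam : ℂ, IsEig m n A lam ∧ ‖lam‖ = r} := by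
      refine ⟨0, ⟨fun _ => 1, ?_, ?_⟩, by simp⟩
      · intro h
        have h8 := congrFun h i
        simp at h8
      · intro i1
        have h4 : i1 = i := hallei _
        rw [Finset.sum_eq_zero (fun t _ => by rw [h4, hi t, Complex.ofReal_zero, zero_mul])]
        simp
    rw [specRad]
    apply le_antisymm
    · exact Real.sSup_le hsub le_rfl
    · exact le_csSup ⟨0, fun r hr => hsub r hr⟩ hmem0

end degenerate

theorem stmt2 (m n : ℕ) (hm : 2 ≤ m) (hn : 0 < n)
    (A : Fin n → (Fin (m - 1) → Fin n) → ℝ) (hA : ∀ i t, 0 ≤ A i t)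
    (hirr : StronglyConnected (tArc m n A)) :
    sInf {r : ℝ | ∃ (p : ℕ) (γ : ℕ → Fin n), IsCircuit (tArc m n A) p γ ∧
        r = (∏ j ∈ Finset.range p, sliceSum m n A (γ j)) ^ ((p : ℝ)⁻¹)}
      ≤ specRad m n A ∧
    specRad m n A ≤
      sSup {r : ℝ | ∃ (p : ℕ) (γ : ℕ → Fin n), IsCircuit (tArc m n A) p γ ∧
        r = (∏ j ∈ Finset.range p, sliceSum m n A (γ j)) ^ ((p : ℝ)⁻¹)} := by
  have hupper := specRad_le_sSup m n hm hn A hA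
  by_cases hall : ∀ i, ∃ t : Fin (m - 1) → Fin n, A i t ≠ 0
  · exact ⟨sInf_le_specRad_main m n hm hn A hA hall, hupper⟩
  · push_neg at hall
    obtain ⟨i, hi⟩ := hall
    obtain ⟨hempty, hspec⟩ := degenerate_case m n hm hn A hirr i hi
    constructor
    · show sInf (circSet m n A) ≤ specRad m n A
      rw [hempty, hspec, Real.sInf_empty]
    · show specRad m n A ≤ sSup (circSet m n A)
      rw [hempty, hspec, Real.sSup_empty]
end

section
/- Let A be a nonnegative weakly irreducible tensor of order m and dimension n. For any positive vector x, min over circuits gamma in G_A of (prod_{i in gamma} (A x^{m-1})_i / x_i^{m-1})^{1/|gamma|} <= rho(A) <= max over circuits gamma in G_A of (prod_{i in gamma} (A x^{m-1})_i / x_i^{m-1})^{1/|gamma|}. -/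
open scoped BigOperators
open Finset

open Finset Filter Topology

lemma sum_prod_pow (k n : ℕ) (y : Fin n → ℝ) :
    ∑ t : Fin k → Fin n, ∏ j, y (t j) = (∑ i, y i) ^ k := by
  have := Finset.prod_univ_sum (fun _ : Fin k => (univ : Finset (Fin n))) (fun _ j => y j)
  simp only [Fintype.piFinset_univ] at this
  rw [← this, Finset.prod_const, card_univ, Fintype.card_fin]

lemma telescope (p : ℕ) (g : ℕ → ℝ) (hg : ∀ k, 0 < g k) (hgp : g p = g 0)
    (a b : ℕ → ℝ) (ha : ∀ k, 0 ≤ a k)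
    (h : ∀ k < p, a k * g k ≤ b k * g (k + 1)) :
    ∏ k ∈ range p, a k ≤ ∏ k ∈ range p, b k := by
  have h2 : ∏ k ∈ range p, g (k + 1) = ∏ k ∈ range p, g k := by
    have e2 := Finset.prod_range_succ' g p
    rw [Finset.prod_range_succ g p, hgp] at e2
    exact mul_right_cancel₀ (hg 0).ne' e2.symm
  have h1 : ∏ k ∈ range p, (a k * g k) ≤ ∏ k ∈ range p, (b k * g (k + 1)) :=
    Finset.prod_le_prod (fun k _ => mul_nonneg (ha k) (hg k).le)
      (fun k hk => h k (Finset.mem_range.mp hk))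
  rw [Finset.prod_mul_distrib, Finset.prod_mul_distrib, h2] at h1
  exact le_of_mul_le_mul_right h1 (Finset.prod_pos fun k _ => hg k)

lemma pow_root_le {L Q : ℝ} {p : ℕ} (hL : 0 ≤ L) (hp : p ≠ 0) (h : L ^ p ≤ Q) :
    L ≤ Q ^ ((p : ℝ)⁻¹) := by
  have e : L = (L ^ p) ^ ((p : ℝ)⁻¹) := by
    rw [← Real.rpow_natCast L p, ← Real.rpow_mul hL, mul_inv_cancel₀ (by exact_mod_cast hp),
      Real.rpow_one]
  rw [e]
  exact Real.rpow_le_rpow (pow_nonneg hL p) h (by positivity)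

lemma root_le_pow {L Q : ℝ} {p : ℕ} (hL : 0 ≤ L) (hQ : 0 ≤ Q) (hp : p ≠ 0) (h : Q ≤ L ^ p) :
    Q ^ ((p : ℝ)⁻¹) ≤ L := by
  have e : L = (L ^ p) ^ ((p : ℝ)⁻¹) := by
    rw [← Real.rpow_natCast L p, ← Real.rpow_mul hL, mul_inv_cancel₀ (by exact_mod_cast hp),
      Real.rpow_one]
  rw [e]
  exact Real.rpow_le_rpow hQ h (by positivity)

lemma Ax_nonneg {m n : ℕ} {A : Fin n → (Fin (m - 1) → Fin n) → ℝ} {y : Fin n → ℝ}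
    (hA : ∀ i t, 0 ≤ A i t) (hy : ∀ i, 0 ≤ y i) (i : Fin n) : 0 ≤ Ax m n A y i :=
  Finset.sum_nonneg fun t _ => mul_nonneg (hA i t) (Finset.prod_nonneg fun j _ => hy (t j))

lemma Ax_mono {m n : ℕ} {A : Fin n → (Fin (m - 1) → Fin n) → ℝ} {y z : Fin n → ℝ}
    (hA : ∀ i t, 0 ≤ A i t) (hy : ∀ i, 0 ≤ y i) (hyz : ∀ i, y i ≤ z i) (i : Fin n) :
    Ax m n A y i ≤ Ax m n A z i :=
  Finset.sum_le_sum fun t _ => mul_le_mul_of_nonneg_left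
    (Finset.prod_le_prod (fun j _ => hy (t j)) (fun j _ => hyz (t j))) (hA i t)

lemma Ax_entry_mono {m n : ℕ} {A B : Fin n → (Fin (m - 1) → Fin n) → ℝ} {y : Fin n → ℝ}
    (hAB : ∀ i t, A i t ≤ B i t) (hy : ∀ i, 0 ≤ y i) (i : Fin n) :
    Ax m n A y i ≤ Ax m n B y i :=
  Finset.sum_le_sum fun t _ => mul_le_mul_of_nonneg_right (hAB i t)
    (Finset.prod_nonneg fun j _ => hy (t j))

lemma Ax_smul {m n : ℕ} (A : Fin n → (Fin (m - 1) → Fin n) → ℝ) (c : ℝ) (y : Fin n → ℝ)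
    (i : Fin n) : Ax m n A (fun j => c * y j) i = c ^ (m - 1) * Ax m n A y i := by
  unfold Ax
  rw [Finset.mul_sum]
  refine Finset.sum_congr rfl fun t _ => ?_
  rw [Finset.prod_mul_distrib, Finset.prod_const, card_univ, Fintype.card_fin]
  ring

lemma Ax_add_const {m n : ℕ} (A : Fin n → (Fin (m - 1) → Fin n) → ℝ) (c : ℝ) (y : Fin n → ℝ)
    (i : Fin n) :
    Ax m n (fun i t => A i t + c) y i = Ax m n A y i + c * (∑ i, y i) ^ (m - 1) := by
  unfold Ax
  rw [← sum_prod_pow (m-1) n y, Finset.mul_sum, ← Finset.sum_add_distrib]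
  exact Finset.sum_congr rfl fun t _ => by ring

lemma continuous_Ax {m n : ℕ} (A : Fin n → (Fin (m - 1) → Fin n) → ℝ) (i : Fin n) :
    Continuous fun y : Fin n → ℝ => Ax m n A y i :=
  continuous_finset_sum _ fun t _ =>
    continuous_const.mul (continuous_finset_prod _ fun j _ => continuous_apply (t j))

def simplex (n : ℕ) : Set (Fin n → ℝ) := {y | (∀ i, 0 ≤ y i) ∧ ∑ i, y i = 1}

lemma isCompact_simplex (n : ℕ) : IsCompact (simplex n) := by
  have hsub : simplex n ⊆ Set.univ.pi fun _ : Fin n => Set.Icc (0:ℝ) 1 := by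
    rintro y ⟨h0, h1⟩ i _
    exact ⟨h0 i, by rw [← h1]; exact Finset.single_le_sum (fun j _ => h0 j) (mem_univ i)⟩
  have hclosed : IsClosed (simplex n) := by
    have h1 : IsClosed {y : Fin n → ℝ | ∀ i, 0 ≤ y i} := by
      have : {y : Fin n → ℝ | ∀ i, 0 ≤ y i} = ⋂ i, {y | 0 ≤ y i} := by
        ext y; simp
      rw [this]
      exact isClosed_iInter fun i => isClosed_le continuous_const (continuous_apply i)
    have h2 : IsClosed {y : Fin n → ℝ | ∑ i, y i = 1} :=
      isClosed_eq (continuous_finset_sum _ fun i _ => continuous_apply i) continuous_const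
    exact h1.inter h2
  exact (isCompact_univ_pi fun _ => isCompact_Icc).of_isClosed_subset hclosed hsub

lemma pos_eigenpair (m n : ℕ) (hm : 2 ≤ m) (hn : 0 < n)
    (B : Fin n → (Fin (m - 1) → Fin n) → ℝ) (hB : ∀ i t, 0 < B i t) :
    ∃ (lam : ℝ) (y : Fin n → ℝ), 0 < lam ∧ (∀ i, 0 < y i) ∧ (∑ i, y i = 1) ∧
      ∀ i, Ax m n B y i = lam * y i ^ (m - 1) := by
  classical
  have hm1 : m - 1 ≠ 0 := by omega
  have hFin : Nonempty (Fin (m - 1)) := ⟨⟨0, by omega⟩⟩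
  have hBnn : ∀ i t, 0 ≤ B i t := fun i t => (hB i t).le
  -- the Collatz–Wielandt set
  set Ω : Set ℝ :=
    {t : ℝ | ∃ y ∈ simplex n, ∀ i, t * y i ^ (m - 1) ≤ Ax m n B y i} with hΩ
  -- positivity of Ax at simplex points
  have hAxpos : ∀ y ∈ simplex n, ∀ i, 0 < Ax m n B y i := by
    rintro y ⟨h0, h1⟩ i
    obtain ⟨q, hq⟩ : ∃ q, 0 < y q := by
      by_contra h
      push_neg at h
      have : ∑ i, y i = 0 := Finset.sum_eq_zero fun i _ => le_antisymm (h i) (h0 i)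
      rw [h1] at this; norm_num at this
    have hterm : 0 < B i (fun _ => q) * ∏ _j : Fin (m-1), y q :=
      mul_pos (hB _ _) (Finset.prod_pos fun _ _ => hq)
    calc (0:ℝ) < B i (fun _ => q) * ∏ j : Fin (m-1), y ((fun _ => q) j) := hterm
      _ ≤ Ax m n B y i := Finset.single_le_sum
          (f := fun t : Fin (m-1) → Fin n => B i t * ∏ j, y (t j))
          (fun t _ => mul_nonneg (hBnn i t) (Finset.prod_nonneg fun j _ => h0 (t j)))
          (mem_univ _)
  -- uniform vector
  have hnR : (0:ℝ) < n := by exact_mod_cast hn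
  set u : Fin n → ℝ := fun _ => (n : ℝ)⁻¹ with hu
  have hus : u ∈ simplex n := by
    constructor
    · intro i; positivity
    · simp [hu, Finset.sum_const, card_univ]
      field_simp
  -- a positive element of Ω
  obtain ⟨i₁, -, hi₁⟩ := Finset.exists_min_image (univ : Finset (Fin n))
    (fun i => Ax m n B u i / u i ^ (m-1)) ⟨⟨0, hn⟩, mem_univ _⟩
  set t₁ : ℝ := Ax m n B u i₁ / u i₁ ^ (m-1) with ht₁
  have hupos : ∀ i, (0:ℝ) < u i := fun i => by positivity
  have ht₁pos : 0 < t₁ := div_pos (hAxpos u hus i₁) (pow_pos (hupos i₁) _)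
  have ht₁Ω : t₁ ∈ Ω := by
    refine ⟨u, hus, fun i => ?_⟩
    have := hi₁ i (mem_univ i)
    rw [div_le_div_iff₀ (pow_pos (hupos i₁) _) (pow_pos (hupos i) _)] at this
    calc t₁ * u i ^ (m-1) ≤ Ax m n B u i / u i ^ (m-1) * u i ^ (m-1) := by
          rw [ht₁]
          exact mul_le_mul_of_nonneg_right (by
            rw [div_le_div_iff₀ (pow_pos (hupos i₁) _) (pow_pos (hupos i) _)]
            exact this) (pow_nonneg (hupos i).le _)
      _ = Ax m n B u i := div_mul_cancel₀ _ (pow_pos (hupos i) _).ne'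
  -- Ω is bounded above
  obtain ⟨P, -, hP⟩ := Finset.exists_max_image (univ : Finset (Fin n × (Fin (m-1) → Fin n)))
    (fun p => B p.1 p.2) ⟨⟨⟨0, hn⟩, fun _ => ⟨0, hn⟩⟩, mem_univ _⟩
  set Bmax : ℝ := B P.1 P.2 with hBmax
  have hBmaxpos : 0 < Bmax := hB _ _
  have hAxle : ∀ y ∈ simplex n, ∀ i, Ax m n B y i ≤ Bmax := by
    rintro y ⟨h0, h1⟩ i
    calc Ax m n B y i ≤ ∑ t : Fin (m-1) → Fin n, Bmax * ∏ j, y (t j) :=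
          Finset.sum_le_sum fun t _ => mul_le_mul_of_nonneg_right (hP (i, t) (mem_univ _))
            (Finset.prod_nonneg fun j _ => h0 (t j))
      _ = Bmax * (∑ i, y i) ^ (m-1) := by rw [← Finset.mul_sum, sum_prod_pow]
      _ = Bmax := by rw [h1, one_pow, mul_one]
  have hΩbdd : BddAbove Ω := by
    refine ⟨Bmax * (n:ℝ) ^ (m-1), ?_⟩
    rintro t ⟨y, hy, hty⟩
    obtain ⟨i₂, -, hi₂⟩ := Finset.exists_max_image (univ : Finset (Fin n)) y ⟨⟨0, hn⟩, mem_univ _⟩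
    have hsum : (1:ℝ) ≤ (n:ℝ) * y i₂ := by
      have he : ∑ _i : Fin n, y i₂ = (n:ℝ) * y i₂ := by
        rw [Finset.sum_const, card_univ, Fintype.card_fin, nsmul_eq_mul]
      calc (1:ℝ) = ∑ i, y i := hy.2.symm
        _ ≤ ∑ _i : Fin n, y i₂ := Finset.sum_le_sum fun i _ => hi₂ i (mem_univ i)
        _ = (n:ℝ) * y i₂ := he
    have hyi₂ : (n:ℝ)⁻¹ ≤ y i₂ := by
      calc (n:ℝ)⁻¹ = (n:ℝ)⁻¹ * 1 := (mul_one _).symm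
        _ ≤ (n:ℝ)⁻¹ * ((n:ℝ) * y i₂) := mul_le_mul_of_nonneg_left hsum (by positivity)
        _ = y i₂ := by field_simp
    rcases le_or_gt t 0 with ht | ht
    · exact ht.trans (by positivity)
    · have h1 : t * ((n:ℝ)⁻¹) ^ (m-1) ≤ t * y i₂ ^ (m-1) :=
        mul_le_mul_of_nonneg_left (pow_le_pow_left₀ (by positivity) hyi₂ _) ht.le
      have h2 : t * y i₂ ^ (m-1) ≤ Bmax := (hty i₂).trans (hAxle y hy i₂)
      have h3 : t * ((n:ℝ)⁻¹) ^ (m-1) ≤ Bmax := h1.trans h2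
      calc t = t * ((n:ℝ)⁻¹) ^ (m-1) * (n:ℝ) ^ (m-1) := by
            rw [mul_assoc, ← mul_pow]
            field_simp; rw [one_pow]
        _ ≤ Bmax * (n:ℝ) ^ (m-1) := mul_le_mul_of_nonneg_right h3 (by positivity)
  have hΩne : Ω.Nonempty := ⟨t₁, ht₁Ω⟩
  set lam : ℝ := sSup Ω with hlam
  have hlampos : 0 < lam := lt_of_lt_of_le ht₁pos (le_csSup hΩbdd ht₁Ω)
  -- the sup is attained with a nonnegative witness
  have hattain : ∃ y ∈ simplex n, ∀ i, lam * y i ^ (m - 1) ≤ Ax m n B y i := by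
    have hseq : ∀ k : ℕ, ∃ y ∈ simplex n, ∀ i,
        (lam - 1/(k+1)) * y i ^ (m - 1) ≤ Ax m n B y i := by
      intro k
      have hlt : lam - 1/(k+1) < sSup Ω := by
        rw [← hlam]; have : (0:ℝ) < 1/(k+1) := by positivity
        linarith
      obtain ⟨t, ⟨y, hy, hty⟩, htl⟩ := exists_lt_of_lt_csSup hΩne hlt
      exact ⟨y, hy, fun i => le_trans
        (mul_le_mul_of_nonneg_right htl.le (pow_nonneg (hy.1 i) _)) (hty i)⟩
    choose ys hys hineq using hseq
    obtain ⟨ystar, hystar, φ, hφ, hconv⟩ := (isCompact_simplex n).tendsto_subseq hys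
    refine ⟨ystar, hystar, fun i => ?_⟩
    have hconvi : Tendsto (fun k => ys (φ k) i) atTop (𝓝 (ystar i)) :=
      ((continuous_apply i).tendsto _).comp hconv
    have hAxconv : Tendsto (fun k => Ax m n B (ys (φ k)) i) atTop (𝓝 (Ax m n B ystar i)) :=
      ((continuous_Ax B i).tendsto _).comp hconv
    have hcoef : Tendsto (fun k => lam - 1/((φ k : ℝ)+1)) atTop (𝓝 lam) := by
      have h0 : Tendsto (fun k : ℕ => 1/((k:ℝ)+1)) atTop (𝓝 0) :=
        tendsto_one_div_add_atTop_nhds_zero_nat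
      have := (h0.comp hφ.tendsto_atTop)
      have h2 : Tendsto (fun k => lam - 1/((φ k : ℝ)+1)) atTop (𝓝 (lam - 0)) :=
        tendsto_const_nhds.sub this
      simpa using h2
    have hLHS : Tendsto (fun k => (lam - 1/((φ k : ℝ)+1)) * ys (φ k) i ^ (m-1))
        atTop (𝓝 (lam * ystar i ^ (m-1))) := hcoef.mul (hconvi.pow _)
    exact le_of_tendsto_of_tendsto' hLHS hAxconv fun k => hineq (φ k) i
  obtain ⟨y0, hy0s, hy0⟩ := hattain
  -- the improved positive witness z
  set z : Fin n → ℝ := fun i => (Ax m n B y0 i / lam) ^ ((m-1:ℕ):ℝ)⁻¹ with hz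
  have hAxy0pos : ∀ i, 0 < Ax m n B y0 i := hAxpos y0 hy0s
  have hzpos : ∀ i, 0 < z i := fun i =>
    Real.rpow_pos_of_pos (div_pos (hAxy0pos i) hlampos) _
  have hzpow : ∀ i, z i ^ (m-1) = Ax m n B y0 i / lam := fun i =>
    Real.rpow_inv_natCast_pow (le_of_lt (div_pos (hAxy0pos i) hlampos)) hm1
  have hy0z : ∀ i, y0 i ≤ z i := by
    intro i
    refine le_of_pow_le_pow_left₀ hm1 (hzpos i).le ?_
    rw [hzpow i, le_div_iff₀ hlampos, mul_comm]
    exact hy0 i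
  have hkey : ∀ i, lam * z i ^ (m-1) ≤ Ax m n B z i := by
    intro i
    rw [hzpow i, mul_div_cancel₀ _ hlampos.ne']
    exact Ax_mono hBnn hy0s.1 hy0z i
  -- it must be an exact eigenvector
  by_cases hex : ∀ i, Ax m n B z i = lam * z i ^ (m-1)
  · -- normalize z
    set S : ℝ := ∑ i, z i with hS
    have hSpos : 0 < S := Finset.sum_pos (fun i _ => hzpos i) ⟨⟨0, hn⟩, mem_univ _⟩
    refine ⟨lam, fun i => S⁻¹ * z i, hlampos, fun i => mul_pos (inv_pos.mpr hSpos) (hzpos i), ?_, fun i => ?_⟩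
    · rw [← Finset.mul_sum, ← hS, inv_mul_cancel₀ hSpos.ne']
    · rw [Ax_smul, hex i, mul_pow]
      ring
  · -- strict improvement: contradiction with sup
    exfalso
    push_neg at hex
    obtain ⟨i₀, hi₀⟩ := hex
    have hstrict : lam * z i₀ ^ (m-1) < Ax m n B z i₀ := lt_of_le_of_ne (hkey i₀) (Ne.symm hi₀)
    set w : Fin n → ℝ := fun i => (Ax m n B z i / lam) ^ ((m-1:ℕ):ℝ)⁻¹ with hw
    have hAxy0eq : ∀ i, Ax m n B y0 i = lam * z i ^ (m-1) := fun i => by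
      rw [hzpow i, mul_div_cancel₀ _ hlampos.ne']
    have hAxzpos : ∀ i, 0 < Ax m n B z i := by
      intro i
      refine lt_of_lt_of_le (hAxy0pos i) ?_
      rw [hAxy0eq i]
      exact hkey i
    have hwpos : ∀ i, 0 < w i := fun i => Real.rpow_pos_of_pos (div_pos (hAxzpos i) hlampos) _
    have hwpow : ∀ i, w i ^ (m-1) = Ax m n B z i / lam := fun i =>
      Real.rpow_inv_natCast_pow (le_of_lt (div_pos (hAxzpos i) hlampos)) hm1
    have hzw : ∀ i, z i ≤ w i := by
      intro i
      refine le_of_pow_le_pow_left₀ hm1 (hwpos i).le ?_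
      rw [hwpow i, le_div_iff₀ hlampos, mul_comm]
      exact hkey i
    have hzw0 : z i₀ < w i₀ := by
      refine lt_of_pow_lt_pow_left₀ (m-1) (hwpos i₀).le ?_
      rw [hwpow i₀, lt_div_iff₀ hlampos, mul_comm]
      exact hstrict
    have hstrictall : ∀ j, lam * w j ^ (m-1) < Ax m n B w j := by
      intro j
      rw [hwpow j, mul_div_cancel₀ _ hlampos.ne']
      refine Finset.sum_lt_sum (fun t _ => mul_le_mul_of_nonneg_left
        (Finset.prod_le_prod (fun k _ => (hzpos (t k)).le) fun k _ => hzw (t k)) (hBnn j t))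
        ⟨fun _ => i₀, mem_univ _, ?_⟩
      have h1 : ∏ k : Fin (m-1), z ((fun _ => i₀) k) < ∏ k : Fin (m-1), w ((fun _ => i₀) k) := by
        rw [Finset.prod_const, Finset.prod_const]
        exact pow_lt_pow_left₀ hzw0 (hzpos i₀).le (by simpa using hm1)
      exact mul_lt_mul_of_pos_left h1 (hB j _)
    -- new element of Ω exceeding the sup
    obtain ⟨i₃, -, hi₃⟩ := Finset.exists_min_image (univ : Finset (Fin n))
      (fun i => Ax m n B w i / w i ^ (m-1)) ⟨⟨0, hn⟩, mem_univ _⟩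
    set t' : ℝ := Ax m n B w i₃ / w i₃ ^ (m-1) with ht'
    have ht'gt : lam < t' := by
      rw [ht', lt_div_iff₀ (pow_pos (hwpos i₃) _)]
      have := hstrictall i₃; linarith
    have ht'Ω : t' ∈ Ω := by
      set Sw : ℝ := ∑ i, w i with hSw
      have hSwpos : 0 < Sw := Finset.sum_pos (fun i _ => hwpos i) ⟨⟨0, hn⟩, mem_univ _⟩
      refine ⟨fun i => Sw⁻¹ * w i, ⟨fun i => (mul_pos (inv_pos.mpr hSwpos) (hwpos i)).le, ?_⟩, fun i => ?_⟩
      · rw [← Finset.mul_sum, ← hSw, inv_mul_cancel₀ hSwpos.ne']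
      · rw [Ax_smul, mul_pow]
        rw [show t' * ((Sw⁻¹) ^ (m-1) * w i ^ (m-1)) = (Sw⁻¹) ^ (m-1) * (t' * w i ^ (m-1)) by ring]
        refine mul_le_mul_of_nonneg_left ?_ (pow_nonneg (inv_pos.mpr hSwpos).le _)
        have := hi₃ i (mem_univ i)
        rw [ht']
        calc Ax m n B w i₃ / w i₃ ^ (m-1) * w i ^ (m-1)
            ≤ Ax m n B w i / w i ^ (m-1) * w i ^ (m-1) :=
              mul_le_mul_of_nonneg_right this (pow_nonneg (hwpos i).le _)
          _ = Ax m n B w i := div_mul_cancel₀ _ (pow_pos (hwpos i) _).ne'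
    exact absurd (le_csSup hΩbdd ht'Ω) (not_le.mpr ht'gt)

lemma telescope' (p : ℕ) (g : ℕ → ℝ) (hg : ∀ k, 0 < g k) (hgp : g p = g 0)
    (a b : ℕ → ℝ) (ha : ∀ k, 0 ≤ a k)
    (h : ∀ k < p, a k * g (k + 1) ≤ b k * g k) :
    ∏ k ∈ range p, a k ≤ ∏ k ∈ range p, b k := by
  have h2 : ∏ k ∈ range p, g (k + 1) = ∏ k ∈ range p, g k := by
    have e2 := Finset.prod_range_succ' g p
    rw [Finset.prod_range_succ g p, hgp] at e2
    exact mul_right_cancel₀ (hg 0).ne' e2.symm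
  have h1 : ∏ k ∈ range p, (a k * g (k + 1)) ≤ ∏ k ∈ range p, (b k * g k) :=
    Finset.prod_le_prod (fun k _ => mul_nonneg (ha k) (hg (k+1)).le)
      (fun k hk => h k (Finset.mem_range.mp hk))
  rw [Finset.prod_mul_distrib, Finset.prod_mul_distrib, h2] at h1
  exact le_of_mul_le_mul_right h1 (Finset.prod_pos fun k _ => hg k)

lemma pigeonhole_orbit {n : ℕ} (hn : 0 < n) (u : ℕ → Fin n) :
    ∃ k1 k2 : ℕ, k1 < k2 ∧ u k1 = u k2 := by
  obtain ⟨a, b, hab, h⟩ := Fintype.exists_ne_map_eq_of_card_lt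
    (fun k : Fin (n+1) => u (k : ℕ)) (by simp)
  rcases hab.lt_or_gt with hlt | hlt
  · exact ⟨a, b, hlt, h⟩
  · exact ⟨b, a, hlt, h.symm⟩

lemma eig_le_rmax {m n : ℕ} (hm : 2 ≤ m) (hn : 0 < n)
    (A : Fin n → (Fin (m - 1) → Fin n) → ℝ) (hA : ∀ i t, 0 ≤ A i t)
    (x : Fin n → ℝ) (hx : ∀ i, 0 < x i)
    (Y : Fin n → ℝ) (hY : ∀ i, 0 ≤ Y i) (hYne : ∃ i, 0 < Y i)
    (L : ℝ) (hmaster : ∀ i, L * Y i ^ (m - 1) ≤ Ax m n A Y i) :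
    ∃ i, L ≤ Ax m n A x i / x i ^ (m - 1) := by
  classical
  set c : Fin n → ℝ := fun i => Y i / x i with hc
  have hYc : ∀ i, Y i = c i * x i := fun i => (div_mul_cancel₀ _ (hx i).ne').symm
  obtain ⟨i₀, -, hi₀⟩ := Finset.exists_max_image (univ : Finset (Fin n)) c ⟨⟨0, hn⟩, mem_univ _⟩
  have hci₀ : 0 < c i₀ := by
    obtain ⟨j, hj⟩ := hYne
    exact lt_of_lt_of_le (div_pos hj (hx j)) (hi₀ j (mem_univ j))
  refine ⟨i₀, ?_⟩
  have h1 : Ax m n A Y i₀ ≤ c i₀ ^ (m-1) * Ax m n A x i₀ := by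
    rw [← Ax_smul A (c i₀) x i₀]
    refine Finset.sum_le_sum fun t _ => ?_
    refine mul_le_mul_of_nonneg_left
      (Finset.prod_le_prod (fun j _ => hY (t j)) fun j _ => ?_) (hA i₀ t)
    rw [hYc (t j)]
    exact mul_le_mul_of_nonneg_right (hi₀ (t j) (mem_univ _)) (hx (t j)).le
  have h2 : L * (c i₀ ^ (m-1) * x i₀ ^ (m-1)) ≤ c i₀ ^ (m-1) * Ax m n A x i₀ := by
    rw [← mul_pow, ← hYc i₀]
    exact (hmaster i₀).trans h1
  have hcp : 0 < c i₀ ^ (m-1) := pow_pos hci₀ _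
  have hxp : 0 < x i₀ ^ (m-1) := pow_pos (hx i₀) _
  rw [le_div_iff₀ hxp]
  have := (mul_le_mul_iff_of_pos_left hcp).mp (by
    calc c i₀ ^ (m-1) * (L * x i₀ ^ (m-1)) = L * (c i₀ ^ (m-1) * x i₀ ^ (m-1)) := by ring
      _ ≤ c i₀ ^ (m-1) * Ax m n A x i₀ := h2)
  linarith

lemma upper_circuit {m n : ℕ} (hm : 2 ≤ m) (hn : 0 < n)
    (A : Fin n → (Fin (m - 1) → Fin n) → ℝ) (hA : ∀ i t, 0 ≤ A i t)
    (x : Fin n → ℝ) (hx : ∀ i, 0 < x i)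
    (Y : Fin n → ℝ) (hY : ∀ i, 0 ≤ Y i) (hYne : ∃ i, 0 < Y i)
    (L : ℝ) (hL0 : 0 < L) (hmaster : ∀ i, L * Y i ^ (m - 1) ≤ Ax m n A Y i) :
    ∃ p γ, IsCircuit (tArc m n A) p γ ∧
      L ≤ (∏ j ∈ Finset.range p, Ax m n A x (γ j) / x (γ j) ^ (m - 1)) ^ ((p : ℝ)⁻¹) := by
  classical
  have hm1 : m - 1 ≠ 0 := by omega
  set c : Fin n → ℝ := fun i => Y i / x i with hc
  have hc0 : ∀ i, 0 ≤ c i := fun i => div_nonneg (hY i) (hx i).le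
  have hYc : ∀ i, Y i = c i * x i := fun i => (div_mul_cancel₀ _ (hx i).ne').symm
  set Nf : Fin n → Finset (Fin n) := fun i => univ.filter (fun j => tArc m n A i j) with hNf
  have hchoice : ∀ i, ∃ j, (Nf i).Nonempty → j ∈ Nf i ∧ ∀ k ∈ Nf i, c k ≤ c j := by
    intro i
    by_cases h : (Nf i).Nonempty
    · obtain ⟨j, hj, hmax⟩ := Finset.exists_max_image (Nf i) c h
      exact ⟨j, fun _ => ⟨hj, hmax⟩⟩
    · exact ⟨i, fun hh => absurd hh h⟩
  choose σ hσ using hchoice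
  have hstep : ∀ i, 0 < c i →
      L * c i ^ (m-1) ≤ Ax m n A x i / x i ^ (m-1) * c (σ i) ^ (m-1) ∧
      0 < c (σ i) ∧ tArc m n A i (σ i) := by
    intro i hci
    have hYi : 0 < Y i := by rw [hYc i]; exact mul_pos hci (hx i)
    have hrow : (Nf i).Nonempty := by
      by_contra h
      have hz : ∀ t, A i t = 0 := by
        intro t
        by_contra hAt
        exact h ⟨t ⟨0, by omega⟩, Finset.mem_filter.mpr
          ⟨mem_univ _, ⟨t, hAt, ⟨⟨0, by omega⟩, rfl⟩⟩⟩⟩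
      have hzero : Ax m n A Y i = 0 := Finset.sum_eq_zero fun t _ => by rw [hz t, zero_mul]
      have h2 := hmaster i
      rw [hzero] at h2
      have : 0 < L * Y i ^ (m-1) := mul_pos hL0 (pow_pos hYi _)
      linarith
    obtain ⟨hσmem, hσmax⟩ := hσ i hrow
    have harc : tArc m n A i (σ i) := (Finset.mem_filter.mp hσmem).2
    have h1 : Ax m n A Y i ≤ c (σ i) ^ (m-1) * Ax m n A x i := by
      rw [← Ax_smul A (c (σ i)) x i]
      refine Finset.sum_le_sum fun t _ => ?_
      by_cases hAt : A i t = 0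
      · rw [hAt, zero_mul, zero_mul]
      · refine mul_le_mul_of_nonneg_left
          (Finset.prod_le_prod (fun j _ => hY (t j)) fun j _ => ?_) (hA i t)
        have hmem : t j ∈ Nf i := Finset.mem_filter.mpr ⟨mem_univ _, ⟨t, hAt, ⟨j, rfl⟩⟩⟩
        rw [hYc (t j)]
        exact mul_le_mul_of_nonneg_right (hσmax _ hmem) (hx (t j)).le
    have h2 : L * (c i ^ (m-1) * x i ^ (m-1)) ≤ c (σ i) ^ (m-1) * Ax m n A x i := by
      rw [← mul_pow, ← hYc i]
      exact (hmaster i).trans h1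
    have hxp : 0 < x i ^ (m-1) := pow_pos (hx i) _
    have hres : L * c i ^ (m-1) ≤ Ax m n A x i / x i ^ (m-1) * c (σ i) ^ (m-1) := by
      rw [div_mul_eq_mul_div, le_div_iff₀ hxp]
      calc L * c i ^ (m-1) * x i ^ (m-1) = L * (c i ^ (m-1) * x i ^ (m-1)) := by ring
        _ ≤ c (σ i) ^ (m-1) * Ax m n A x i := h2
        _ = Ax m n A x i * c (σ i) ^ (m-1) := mul_comm _ _
    have hcσ : 0 < c (σ i) := by
      by_contra h
      push_neg at h
      have hc0' : c (σ i) = 0 := le_antisymm h (hc0 _)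
      rw [hc0', zero_pow hm1, mul_zero] at hres
      have : 0 < L * c i ^ (m-1) := mul_pos hL0 (pow_pos hci _)
      linarith
    exact ⟨hres, hcσ, harc⟩
  obtain ⟨iY, hiY⟩ := hYne
  set u : ℕ → Fin n := fun k => σ^[k] iY with hudef
  have hu : ∀ k, 0 < c (u k) := by
    intro k
    induction k with
    | zero => exact div_pos hiY (hx iY)
    | succ k ih =>
      have : u (k+1) = σ (u k) := Function.iterate_succ_apply' σ k iY
      rw [this]
      exact (hstep (u k) ih).2.1
  obtain ⟨k1, k2, hk12, hueq⟩ := pigeonhole_orbit hn u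
  set p : ℕ := k2 - k1 with hpdef
  have hp : 0 < p := by omega
  set γ : ℕ → Fin n := fun j => u (k1 + j) with hγdef
  have hγp : γ p = γ 0 := by
    show u (k1 + (k2 - k1)) = u (k1 + 0)
    rw [Nat.add_sub_cancel' hk12.le, Nat.add_zero]
    exact hueq.symm
  have hγs : ∀ j, γ (j + 1) = σ (γ j) := by
    intro j
    show u (k1 + (j + 1)) = σ (u (k1 + j))
    rw [← Nat.add_assoc]
    exact Function.iterate_succ_apply' σ (k1 + j) iY
  have harcs : ∀ j < p, tArc m n A (γ j) (γ (j + 1)) := by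
    intro j _
    rw [hγs j]
    exact (hstep (γ j) (hu (k1 + j))).2.2
  have htel : ∏ k ∈ range p, L ≤ ∏ k ∈ range p, (Ax m n A x (γ k) / x (γ k) ^ (m-1)) := by
    refine telescope p (fun k => c (γ k) ^ (m-1)) (fun k => pow_pos (hu (k1 + k)) _)
      (by show c (γ p) ^ (m-1) = c (γ 0) ^ (m-1); rw [hγp]) _ _ (fun _ => hL0.le) ?_
    intro k _
    have := (hstep (γ k) (hu (k1 + k))).1
    rw [← hγs k] at this
    exact this
  rw [Finset.prod_const, card_range] at htel
  exact ⟨p, γ, ⟨hp, hγp, harcs⟩, pow_root_le hL0.le (by omega) htel⟩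

lemma lower_circuit {m n : ℕ} (hm : 2 ≤ m) (hn : 0 < n)
    (A : Fin n → (Fin (m - 1) → Fin n) → ℝ) (hA : ∀ i t, 0 ≤ A i t)
    (x : Fin n → ℝ) (hx : ∀ i, 0 < x i) (Hout : ∀ i, ∃ t, A i t ≠ 0)
    (B : Fin n → (Fin (m - 1) → Fin n) → ℝ) (hAB : ∀ i t, A i t ≤ B i t)
    (lam : ℝ) (hlam : 0 ≤ lam) (y : Fin n → ℝ) (hy : ∀ i, 0 < y i)
    (heig : ∀ i, Ax m n B y i = lam * y i ^ (m - 1)) :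
    ∃ p γ, IsCircuit (tArc m n A) p γ ∧
      (∏ j ∈ Finset.range p, Ax m n A x (γ j) / x (γ j) ^ (m - 1)) ^ ((p : ℝ)⁻¹) ≤ lam := by
  classical
  have hm1 : m - 1 ≠ 0 := by omega
  set c : Fin n → ℝ := fun i => y i / x i with hc
  have hcpos : ∀ i, 0 < c i := fun i => div_pos (hy i) (hx i)
  have hyc : ∀ i, y i = c i * x i := fun i => (div_mul_cancel₀ _ (hx i).ne').symm
  set Nf : Fin n → Finset (Fin n) := fun i => univ.filter (fun j => tArc m n A i j) with hNf
  have hNfne : ∀ i, (Nf i).Nonempty := by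
    intro i
    obtain ⟨t, ht⟩ := Hout i
    exact ⟨t ⟨0, by omega⟩, Finset.mem_filter.mpr
      ⟨mem_univ _, ⟨t, ht, ⟨⟨0, by omega⟩, rfl⟩⟩⟩⟩
  have hchoice : ∀ i, ∃ j, j ∈ Nf i ∧ ∀ k ∈ Nf i, c j ≤ c k := by
    intro i
    obtain ⟨j, hj, hmin⟩ := Finset.exists_min_image (Nf i) c (hNfne i)
    exact ⟨j, hj, hmin⟩
  choose τ hτmem hτmin using hchoice
  have harc : ∀ i, tArc m n A i (τ i) := fun i => (Finset.mem_filter.mp (hτmem i)).2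
  have hstep : ∀ i,
      Ax m n A x i / x i ^ (m-1) * c (τ i) ^ (m-1) ≤ lam * c i ^ (m-1) := by
    intro i
    have h1 : c (τ i) ^ (m-1) * Ax m n A x i ≤ Ax m n A y i := by
      rw [← Ax_smul A (c (τ i)) x i]
      refine Finset.sum_le_sum fun t _ => ?_
      by_cases hAt : A i t = 0
      · rw [hAt, zero_mul, zero_mul]
      · refine mul_le_mul_of_nonneg_left
          (Finset.prod_le_prod (fun j _ => mul_nonneg (hcpos (τ i)).le (hx (t j)).le)
            fun j _ => ?_) (hA i t)
        have hmem : t j ∈ Nf i := Finset.mem_filter.mpr ⟨mem_univ _, ⟨t, hAt, ⟨j, rfl⟩⟩⟩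
        rw [hyc (t j)]
        exact mul_le_mul_of_nonneg_right (hτmin i _ hmem) (hx (t j)).le
    have h2 : Ax m n A y i ≤ lam * (c i ^ (m-1) * x i ^ (m-1)) := by
      rw [← mul_pow, ← hyc i, ← heig i]
      exact Ax_entry_mono hAB (fun j => (hy j).le) i
    have hxp : 0 < x i ^ (m-1) := pow_pos (hx i) _
    rw [div_mul_eq_mul_div, div_le_iff₀ hxp]
    calc Ax m n A x i * c (τ i) ^ (m-1) = c (τ i) ^ (m-1) * Ax m n A x i := mul_comm _ _
      _ ≤ Ax m n A y i := h1
      _ ≤ lam * (c i ^ (m-1) * x i ^ (m-1)) := h2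
      _ = lam * c i ^ (m-1) * x i ^ (m-1) := by ring
  set u : ℕ → Fin n := fun k => τ^[k] ⟨0, hn⟩ with hudef
  obtain ⟨k1, k2, hk12, hueq⟩ := pigeonhole_orbit hn u
  set p : ℕ := k2 - k1 with hpdef
  have hp : 0 < p := by omega
  set γ : ℕ → Fin n := fun j => u (k1 + j) with hγdef
  have hγp : γ p = γ 0 := by
    show u (k1 + (k2 - k1)) = u (k1 + 0)
    rw [Nat.add_sub_cancel' hk12.le, Nat.add_zero]
    exact hueq.symm
  have hγs : ∀ j, γ (j + 1) = τ (γ j) := by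
    intro j
    show u (k1 + (j + 1)) = τ (u (k1 + j))
    rw [← Nat.add_assoc]
    exact Function.iterate_succ_apply' τ (k1 + j) ⟨0, hn⟩
  have harcs : ∀ j < p, tArc m n A (γ j) (γ (j + 1)) := by
    intro j _
    rw [hγs j]
    exact harc (γ j)
  have htel : ∏ k ∈ range p, (Ax m n A x (γ k) / x (γ k) ^ (m-1)) ≤ ∏ k ∈ range p, lam := by
    refine telescope' p (fun k => c (γ k) ^ (m-1)) (fun k => pow_pos (hcpos _) _)
      (by show c (γ p) ^ (m-1) = c (γ 0) ^ (m-1); rw [hγp]) _ _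
      (fun k => div_nonneg (Ax_nonneg hA (fun j => (hx j).le) _) (pow_pos (hx _) _).le) ?_
    intro k _
    have := hstep (γ k)
    rw [← hγs k] at this
    exact this
  rw [Finset.prod_const, card_range] at htel
  refine ⟨p, γ, ⟨hp, hγp, harcs⟩, root_le_pow hlam ?_ (by omega) htel⟩
  exact Finset.prod_nonneg fun k _ =>
    div_nonneg (Ax_nonneg hA (fun j => (hx j).le) _) (pow_pos (hx _) _).le

theorem stmt5 (m n : ℕ) (hm : 2 ≤ m) (hn : 0 < n)
    (A : Fin n → (Fin (m - 1) → Fin n) → ℝ) (hA : ∀ i t, 0 ≤ A i t)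
    (hirr : StronglyConnected (tArc m n A))
    (x : Fin n → ℝ) (hx : ∀ i, 0 < x i) :
    sInf {r : ℝ | ∃ (p : ℕ) (γ : ℕ → Fin n), IsCircuit (tArc m n A) p γ ∧
        r = (∏ j ∈ Finset.range p, Ax m n A x (γ j) / x (γ j) ^ (m - 1)) ^ ((p : ℝ)⁻¹)}
      ≤ specRad m n A ∧
    specRad m n A ≤
      sSup {r : ℝ | ∃ (p : ℕ) (γ : ℕ → Fin n), IsCircuit (tArc m n A) p γ ∧
        r = (∏ j ∈ Finset.range p, Ax m n A x (γ j) / x (γ j) ^ (m - 1)) ^ ((p : ℝ)⁻¹)} := by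
  classical
  open Filter Topology in
  set S : Set ℝ := {r : ℝ | ∃ (p : ℕ) (γ : ℕ → Fin n), IsCircuit (tArc m n A) p γ ∧
      r = (∏ j ∈ Finset.range p, Ax m n A x (γ j) / x (γ j) ^ (m - 1)) ^ ((p : ℝ)⁻¹)} with hSdef
  set E : Set ℝ := {r : ℝ | ∃ lam : ℂ, IsEig m n A lam ∧ ‖lam‖ = r} with hEdef
  have hspec : specRad m n A = sSup E := rfl
  have hr_nonneg : ∀ i, 0 ≤ Ax m n A x i / x i ^ (m - 1) := fun i =>
    div_nonneg (Ax_nonneg hA (fun j => (hx j).le) _) (pow_pos (hx i) _).le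
  have hSnonneg : ∀ s ∈ S, 0 ≤ s := by
    rintro s ⟨p, γ, hcirc, rfl⟩
    exact Real.rpow_nonneg (Finset.prod_nonneg fun j _ => hr_nonneg _) _
  have hSbddB : BddBelow S := ⟨0, fun s hs => hSnonneg s hs⟩
  obtain ⟨iR, -, hiR⟩ := Finset.exists_max_image (univ : Finset (Fin n))
    (fun i => Ax m n A x i / x i ^ (m - 1)) ⟨⟨0, hn⟩, mem_univ _⟩
  set R : ℝ := Ax m n A x iR / x iR ^ (m - 1) with hRdef
  have hR0 : 0 ≤ R := hr_nonneg iR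
  have hSbddA : BddAbove S := by
    refine ⟨R, ?_⟩
    rintro s ⟨p, γ, ⟨hp, -, -⟩, rfl⟩
    refine root_le_pow hR0 (Finset.prod_nonneg fun j _ => hr_nonneg _) (by omega) ?_
    calc ∏ j ∈ Finset.range p, Ax m n A x (γ j) / x (γ j) ^ (m - 1)
        ≤ ∏ _j ∈ Finset.range p, R :=
          Finset.prod_le_prod (fun j _ => hr_nonneg _) (fun j _ => hiR _ (mem_univ _))
      _ = R ^ p := by rw [Finset.prod_const, card_range]
  have hmasterE : ∀ lam : ℂ, IsEig m n A lam → ∃ Y : Fin n → ℝ,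
      (∀ i, 0 ≤ Y i) ∧ (∃ i, 0 < Y i) ∧
      ∀ i, ‖lam‖ * Y i ^ (m - 1) ≤ Ax m n A Y i := by
    rintro lam ⟨v, hv, hveq⟩
    refine ⟨fun i => ‖v i‖, fun i => norm_nonneg _, ?_, ?_⟩
    · obtain ⟨i, hi⟩ : ∃ i, v i ≠ 0 := by
        by_contra h; push_neg at h; exact hv (funext h)
      exact ⟨i, norm_pos_iff.mpr hi⟩
    · intro i
      calc ‖lam‖ * ‖v i‖ ^ (m - 1)
          = ‖lam * v i ^ (m - 1)‖ := by rw [norm_mul, norm_pow]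
        _ = ‖∑ t : Fin (m-1) → Fin n, (A i t : ℂ) * ∏ j, v (t j)‖ := by
              rw [hveq i]
        _ ≤ ∑ t : Fin (m-1) → Fin n, ‖(A i t : ℂ) * ∏ j, v (t j)‖ :=
              norm_sum_le _ _
        _ = Ax m n A (fun i => ‖v i‖) i := by
              refine Finset.sum_congr rfl fun t _ => ?_
              rw [norm_mul, norm_prod, Complex.norm_real, Real.norm_of_nonneg (hA i t)]
  have hEbddA : BddAbove E := by
    refine ⟨R, ?_⟩
    rintro e ⟨lam, hlam, rfl⟩
    obtain ⟨Y, hY, hYne, hmaster⟩ := hmasterE lam hlam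
    obtain ⟨i, hi⟩ := eig_le_rmax hm hn A hA x hx Y hY hYne _ hmaster
    exact hi.trans (hiR i (mem_univ i))
  by_cases Hout : ∀ i, ∃ t, A i t ≠ 0
  · -- main case
    have hPk : ∀ k : ℕ, ∃ (lamk : ℝ) (yk : Fin n → ℝ), 0 < lamk ∧ (∀ i, 0 < yk i) ∧
        (∑ i, yk i = 1) ∧
        ∀ i, Ax m n (fun i t => A i t + 1/((k:ℝ)+1)) yk i = lamk * yk i ^ (m - 1) := by
      intro k
      exact pos_eigenpair m n hm hn _ (fun i t =>
        add_pos_of_nonneg_of_pos (hA i t) (by positivity))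
    choose lamk yk hlampos hypos hysum heigk using hPk
    have hABk : ∀ k : ℕ, ∀ (i : Fin n) t, A i t ≤ A i t + 1/((k:ℝ)+1) := fun k i t =>
      le_add_of_nonneg_right (by positivity)
    have hlow : ∀ k, sInf S ≤ lamk k := by
      intro k
      obtain ⟨p, γ, hcirc, hle⟩ := lower_circuit hm hn A hA x hx Hout _ (hABk k)
        (lamk k) (hlampos k).le (yk k) (hypos k) (heigk k)
      refine le_trans (csInf_le hSbddB ?_) hle
      rw [hSdef]; exact ⟨p, γ, hcirc, rfl⟩
    have hSne : S.Nonempty := by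
      obtain ⟨p, γ, hcirc, -⟩ := lower_circuit hm hn A hA x hx Hout _ (hABk 0)
        (lamk 0) (hlampos 0).le (yk 0) (hypos 0) (heigk 0)
      rw [hSdef]
      exact ⟨_, p, γ, hcirc, rfl⟩
    obtain ⟨iC, -, hiC⟩ := Finset.exists_max_image (univ : Finset (Fin n))
      (fun i => (Ax m n A x i + (∑ i, x i) ^ (m - 1)) / x i ^ (m - 1)) ⟨⟨0, hn⟩, mem_univ _⟩
    set C : ℝ := (Ax m n A x iC + (∑ i, x i) ^ (m - 1)) / x iC ^ (m - 1) with hCdef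
    have hC : ∀ k, lamk k ≤ C := by
      intro k
      obtain ⟨i, hi⟩ := eig_le_rmax hm hn (fun i t => A i t + 1/((k:ℝ)+1))
        (fun i t => le_trans (hA i t) (hABk k i t)) x hx (yk k)
        (fun i => (hypos k i).le) ⟨⟨0, hn⟩, hypos k _⟩ (lamk k)
        (fun i => le_of_eq (heigk k i).symm)
      refine hi.trans (le_trans ?_ (hiC i (mem_univ i)))
      rw [div_le_div_iff₀ (pow_pos (hx i) _) (pow_pos (hx i) _)]
      refine mul_le_mul_of_nonneg_right ?_ (pow_pos (hx i) _).le
      rw [Ax_add_const]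
      refine add_le_add (le_refl _) ?_
      have h1 : (1:ℝ)/((k:ℝ)+1) ≤ 1 := by
        rw [div_le_one (by positivity)]; linarith [Nat.cast_nonneg (α := ℝ) k]
      calc 1/((k:ℝ)+1) * (∑ i, x i) ^ (m - 1) ≤ 1 * (∑ i, x i) ^ (m - 1) :=
            mul_le_mul_of_nonneg_right h1
              (pow_nonneg (Finset.sum_nonneg fun i _ => (hx i).le) _)
        _ = (∑ i, x i) ^ (m - 1) := one_mul _
    have hKcomp : IsCompact ((Set.Icc (0:ℝ) C) ×ˢ simplex n) :=
      isCompact_Icc.prod (isCompact_simplex n)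
    have hmem : ∀ k, (lamk k, yk k) ∈ (Set.Icc (0:ℝ) C) ×ˢ simplex n := fun k =>
      ⟨⟨(hlampos k).le, hC k⟩, ⟨fun i => (hypos k i).le, hysum k⟩⟩
    obtain ⟨⟨lamstar, ystar⟩, hstarK, φ, hφ, hconv⟩ := hKcomp.tendsto_subseq hmem
    have hconvlam : Tendsto (fun k => lamk (φ k)) atTop (𝓝 lamstar) :=
      (continuous_fst.tendsto _).comp hconv
    have hconvy : Tendsto (fun k => yk (φ k)) atTop (𝓝 ystar) :=
      (continuous_snd.tendsto _).comp hconv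
    have heigstar : ∀ i, Ax m n A ystar i = lamstar * ystar i ^ (m - 1) := by
      intro i
      have hzero : Tendsto (fun k : ℕ => 1/((φ k : ℝ)+1)) atTop (𝓝 0) :=
        tendsto_one_div_add_atTop_nhds_zero_nat.comp hφ.tendsto_atTop
      have hL : Tendsto (fun k => Ax m n A (yk (φ k)) i + 1/((φ k : ℝ)+1)) atTop
          (𝓝 (Ax m n A ystar i + 0)) :=
        ((((continuous_Ax A i).tendsto _).comp hconvy)).add hzero
      have hR : Tendsto (fun k => lamk (φ k) * (yk (φ k) i) ^ (m - 1)) atTop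
          (𝓝 (lamstar * ystar i ^ (m - 1))) :=
        hconvlam.mul ((((continuous_apply i).tendsto _).comp hconvy).pow _)
      have heq : ∀ k, Ax m n A (yk (φ k)) i + 1/((φ k : ℝ)+1)
          = lamk (φ k) * (yk (φ k) i) ^ (m - 1) := by
        intro k
        have h := heigk (φ k) i
        rw [Ax_add_const, hysum (φ k), one_pow, mul_one] at h
        exact h
      have hL' := hL.congr heq
      have := tendsto_nhds_unique hL' hR
      rw [add_zero] at this
      exact this
    have hlamstar_ge : sInf S ≤ lamstar := ge_of_tendsto' hconvlam (fun k => hlow (φ k))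
    have hlamstar_nonneg : 0 ≤ lamstar := hstarK.1.1
    have hstar_ne : ∃ i, ystar i ≠ 0 := by
      by_contra h
      push_neg at h
      have : ∑ i, ystar i = 0 := Finset.sum_eq_zero fun i _ => h i
      rw [hstarK.2.2] at this
      norm_num at this
    have hEig : IsEig m n A (lamstar : ℂ) := by
      refine ⟨fun i => (ystar i : ℂ), ?_, fun i => ?_⟩
      · intro h
        obtain ⟨i, hi⟩ := hstar_ne
        apply hi
        have h2 := congrFun h i
        rw [Pi.zero_apply] at h2
        exact_mod_cast h2
      · have h := heigstar i
        have : ((Ax m n A ystar i : ℝ) : ℂ) = ((lamstar * ystar i ^ (m - 1) : ℝ) : ℂ) := by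
          exact_mod_cast congrArg Complex.ofReal h
        unfold Ax at this
        push_cast at this ⊢
        exact this
    have hlamE : lamstar ∈ E := by
      rw [hEdef]
      exact ⟨(lamstar : ℂ), hEig, by rw [Complex.norm_real, Real.norm_of_nonneg hlamstar_nonneg]⟩
    have hsupS_nonneg : 0 ≤ sSup S := by
      obtain ⟨s₀, hs₀⟩ := hSne
      exact le_trans (hSnonneg s₀ hs₀) (le_csSup hSbddA hs₀)
    constructor
    · rw [hspec]
      exact hlamstar_ge.trans (le_csSup hEbddA hlamE)
    · rw [hspec]
      refine Real.sSup_le ?_ hsupS_nonneg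
      rintro e ⟨lam, hlam, rfl⟩
      rcases eq_or_ne ‖lam‖ 0 with h0 | h0
      · rw [h0]; exact hsupS_nonneg
      · obtain ⟨Y, hY, hYne, hmaster⟩ := hmasterE lam hlam
        obtain ⟨p, γ, hcirc, hle⟩ := upper_circuit hm hn A hA x hx Y hY hYne _
          (lt_of_le_of_ne (norm_nonneg lam) (Ne.symm h0)) hmaster
        refine hle.trans (le_csSup hSbddA ?_)
        rw [hSdef]
        exact ⟨p, γ, hcirc, rfl⟩
  · -- degenerate case: some row is identically zero
    push_neg at Hout
    obtain ⟨i0, hi0⟩ := Hout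
    have hn1 : n = 1 := by
      by_contra h
      have h2 : 2 ≤ n := by omega
      haveI : Nontrivial (Fin n) := by
        rw [Fin.nontrivial_iff_two_le]; exact h2
      obtain ⟨j, hj⟩ := exists_ne i0
      rcases Relation.ReflTransGen.cases_head (hirr i0 j) with heq | ⟨c, hc, -⟩
      · exact hj heq.symm
      · obtain ⟨t, ht, -⟩ := hc
        exact ht (hi0 t)
    subst hn1
    have hAzero : ∀ i t, A i t = 0 := fun i t => by
      rw [Subsingleton.elim i i0]; exact hi0 t
    have hSempty : S = ∅ := by
      rw [hSdef]
      ext s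
      simp only [Set.mem_setOf_eq, Set.mem_empty_iff_false, iff_false]
      rintro ⟨p, γ, ⟨hp, -, harc⟩, -⟩
      obtain ⟨t, ht, -⟩ := harc 0 hp
      exact ht (hAzero _ t)
    have hEzero : E = {0} := by
      rw [hEdef]
      ext e
      simp only [Set.mem_setOf_eq, Set.mem_singleton_iff]
      constructor
      · rintro ⟨lam, ⟨v, hv, hveq⟩, rfl⟩
        have hlam0 : lam = 0 := by
          obtain ⟨i, hi⟩ : ∃ i, v i ≠ 0 := by
            by_contra h; push_neg at h; exact hv (funext h)
          have h := hveq i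
          rw [Finset.sum_eq_zero (fun t _ => by rw [hAzero i t]; simp)] at h
          rcases mul_eq_zero.mp h.symm with h' | h'
          · exact h'
          · exact absurd h' (pow_ne_zero _ hi)
        rw [hlam0]
        simp
      · rintro rfl
        refine ⟨0, ⟨fun _ => 1, ?_, fun i => ?_⟩, by simp⟩
        · intro h
          have := congrFun h ⟨0, by omega⟩
          simp at this
        · rw [Finset.sum_eq_zero (fun t _ => by rw [hAzero i t]; simp)]
          simp
    rw [hspec, hSempty, hEzero, Real.sInf_empty, Real.sSup_empty, csSup_singleton]
    exact ⟨le_refl 0, le_refl 0⟩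
end
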